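/- arXiv:1801.00343 — 3 statements merged into one kernel-verified Lean document; each statement's English description precedes it below -/
import Mathlib

section
/- Let x be a sequence of real numbers. Then the set of ω ∈ (0,1] such that the statistical cluster points of the subsequence x↾ω equal the statistical cluster points of x is comeager if and only if it is nonmeager, if and only if every ordinary limit point of x is a statistical cluster point of x. -/
open Filter Topology Set MeasureTheory
open scoped ENNReal

noncomputable section

/-- An ideal on ℕ: contains all finite sets, closed under subsets and finite
unions, and does not contain ℕ itself. -/
def IsIdealOn (I : Set (Set ℕ)) : Prop :=
  (∀ ⦃A B : Set ℕ⦄, A ⊆ B → B ∈ I → A ∈ I) ∧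
  (∀ ⦃A B : Set ℕ⦄, A ∈ I → B ∈ I → A ∪ B ∈ I) ∧
  (∀ A : Set ℕ, A.Finite → A ∈ I) ∧
  (Set.univ : Set ℕ) ∉ I

/-- `l` is an `I`-cluster point of the sequence `x`. -/
def IdealClusterPt {X : Type*} [TopologicalSpace X] (I : Set (Set ℕ)) (x : ℕ → X) (l : X) : Prop :=
  ∀ U ∈ 𝓝 l, {n | x n ∈ U} ∉ I

/-- `l` is an `I`-limit point of the sequence `x`. -/
def IdealLimitPt {X : Type*} [TopologicalSpace X] (I : Set (Set ℕ)) (x : ℕ → X) (l : X) : Prop :=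
  ∃ k : ℕ → ℕ, StrictMono k ∧ Tendsto (x ∘ k) atTop (𝓝 l) ∧ Set.range k ∉ I

/-- Ordinary limit points of a sequence. -/
def limitPts {X : Type*} [TopologicalSpace X] (x : ℕ → X) : Set X :=
  {l | ∃ k : ℕ → ℕ, StrictMono k ∧ Tendsto (x ∘ k) atTop (𝓝 l)}

/-- The `i`-th digit (0-indexed; representing `d_{i+1}`) of the non-terminating
dyadic expansion of `ω ∈ (0,1]`. -/
def dyadicDigit (ω : ℝ) (i : ℕ) : ℤ :=
  ⌈(2:ℝ) ^ (i + 1) * ω⌉ - 2 * ⌈(2:ℝ) ^ i * ω⌉ + 1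

/-- The subsequence `x↾ω` of `x` keeping `x i` iff the dyadic digit of `ω` at `i` is `1`. -/
def subseq {X : Type*} (x : ℕ → X) (ω : ℝ) : ℕ → X :=
  fun k => x (Nat.nth (fun i => dyadicDigit ω i = 1) k)

open Classical in
/-- Characteristic-function embedding of `P(ℕ)` into Cantor space. -/
def chi (A : Set ℕ) : ℕ → Bool := fun n => if n ∈ A then true else false

def IsFsigma {α : Type*} [TopologicalSpace α] (s : Set α) : Prop :=
  ∃ F : ℕ → Set α, (∀ n, IsClosed (F n)) ∧ s = ⋃ n, F n

def IsFsigmaDelta {α : Type*} [TopologicalSpace α] (s : Set α) : Prop :=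
  ∃ F : ℕ → Set α, (∀ n, IsFsigma (F n)) ∧ s = ⋂ n, F n

/-- `I` is `F_σ`-separated from its dual filter. -/
def FsigmaSeparated (I : Set (Set ℕ)) : Prop :=
  ∃ A : Set (ℕ → Bool), IsFsigma A ∧ chi '' I ⊆ A ∧ A ∩ chi '' {S : Set ℕ | Sᶜ ∈ I} = ∅

/-- A submeasure on ℕ. -/
def IsSubmeasureOn (φ : Set ℕ → ℝ≥0∞) : Prop :=
  φ ∅ = 0 ∧ (∀ ⦃A B : Set ℕ⦄, A ⊆ B → φ A ≤ φ B) ∧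
    (∀ A B : Set ℕ, φ (A ∪ B) ≤ φ A + φ B) ∧ ∀ n : ℕ, φ {n} ≠ ⊤

/-- A partition of ℕ into nonempty finite sets. -/
def IsFinPartition (P : ℕ → Set ℕ) : Prop :=
  (∀ n, (P n).Finite ∧ (P n).Nonempty) ∧ (⋃ n, P n) = Set.univ ∧
    Pairwise (Function.onFun Disjoint P)

/-- The generalized density ideal determined by `(P n)` and `(μ n)`. -/
def Zmu (P : ℕ → Set ℕ) (μ : ℕ → Set ℕ → ℝ≥0∞) : Set (Set ℕ) :=
  {A | Tendsto (fun n => μ n (A ∩ P n)) atTop (𝓝 0)}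

def IsGenDensityIdeal (I : Set (Set ℕ)) : Prop :=
  ∃ (P : ℕ → Set ℕ) (μ : ℕ → Set ℕ → ℝ≥0∞), IsFinPartition P ∧
    (∀ n, IsSubmeasureOn (μ n)) ∧ (∀ n A, μ n A = μ n (A ∩ P n)) ∧
    Filter.limsup (fun n => μ n (P n)) atTop ≠ 0 ∧ I = Zmu P μ

/-- Exhaustive ideal of a submeasure. -/
def Exh (φ : Set ℕ → ℝ≥0∞) : Set (Set ℕ) :=
  {A | Tendsto (fun n => φ (A \ Set.Iio n)) atTop (𝓝 0)}

open Classical in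
/-- The ideal `I_α`. -/
def Ialpha (α : ℝ) : Set (Set ℕ) :=
  {A | (fun n => ∑ i ∈ Finset.Icc 1 n, if i ∈ A then (i:ℝ) ^ α else 0)
      =o[atTop] (fun n => ∑ i ∈ Finset.Icc 1 n, (i:ℝ) ^ α)}

open Classical in
/-- The ideal of natural density zero sets. -/
def densityZero : Set (Set ℕ) :=
  {A | Tendsto (fun n : ℕ => (∑ i ∈ Finset.range n, if i ∈ A then (1:ℝ) else 0) / n)
      atTop (𝓝 0)}

open Classical in
def phiEU (f : ℕ → ℝ) (A : Set ℕ) : ℝ :=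
  ⨆ n : ℕ, (∑ i ∈ Finset.Icc 1 n, if i ∈ A then f i else 0) / (∑ i ∈ Finset.Icc 1 n, f i)

def ExhReal (φ : Set ℕ → ℝ) : Set (Set ℕ) :=
  {A | Tendsto (fun n => φ (A \ Set.Iio n)) atTop (𝓝 0)}

def IsErdosUlamIdeal (I : Set (Set ℕ)) : Prop :=
  ∃ f : ℕ → ℝ, (∀ n, 0 < f n) ∧
    Tendsto (fun n => ∑ i ∈ Finset.Icc 1 n, f i) atTop atTop ∧
    (fun n => f n) =o[atTop] (fun n => ∑ i ∈ Finset.Icc 1 n, f i) ∧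
    I = ExhReal (phiEU f)

end

section Aux
open Classical

lemma indsum_nonneg (A : Set ℕ) (n : ℕ) :
    0 ≤ ∑ i ∈ Finset.range n, if i ∈ A then (1:ℝ) else 0 :=
  Finset.sum_nonneg fun i _ => by split_ifs <;> norm_num

lemma dz_mono {A B : Set ℕ} (h : A ⊆ B) (hB : B ∈ densityZero) : A ∈ densityZero := by
  simp only [densityZero, Set.mem_setOf_eq] at hB ⊢
  refine squeeze_zero (fun n => div_nonneg (indsum_nonneg A n) (Nat.cast_nonneg n))
    (fun n => ?_) hB
  rcases Nat.eq_zero_or_pos n with hn | hn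
  · simp [hn]
  · rw [div_le_div_iff_of_pos_right (by exact_mod_cast hn)]
    · refine Finset.sum_le_sum fun i _ => ?_
      by_cases hiA : i ∈ A
      · simp [hiA, h hiA]
      · simp only [hiA, if_false]
        split_ifs <;> norm_num

lemma dz_finite {A : Set ℕ} (h : A.Finite) : A ∈ densityZero := by
  simp only [densityZero, Set.mem_setOf_eq]
  refine squeeze_zero (fun n => div_nonneg (indsum_nonneg A n) (Nat.cast_nonneg n))
    (fun n => ?_) (tendsto_const_div_atTop_nhds_zero_nat (h.toFinset.card : ℝ))
  rcases Nat.eq_zero_or_pos n with hn | hn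
  · simp [hn]
  · rw [div_le_div_iff_of_pos_right (by exact_mod_cast hn)]
    have : (∑ i ∈ Finset.range n, if i ∈ A then (1:ℝ) else 0)
        = ((Finset.range n).filter (fun i => i ∈ A)).card := by
      rw [Finset.sum_boole]
    rw [this]
    have hsub : (Finset.range n).filter (fun i => i ∈ A) ⊆ h.toFinset := fun i hi => by
      simp only [Finset.mem_filter] at hi
      simpa using hi.2
    exact_mod_cast Finset.card_le_card hsub

lemma dz_not_mem {A : Set ℕ}
    (h : ∀ N : ℕ, ∃ n, N ≤ n ∧ (n:ℝ) ≤ 2 * ∑ i ∈ Finset.range n, (if i ∈ A then (1:ℝ) else 0)) :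
    A ∉ densityZero := by
  intro hA
  simp only [densityZero, Set.mem_setOf_eq] at hA
  obtain ⟨N, hN⟩ := (Metric.tendsto_atTop.mp hA) (1/2) (by norm_num)
  obtain ⟨n, hn1, hn2⟩ := h (max N 1)
  have hNn : N ≤ n := le_trans (le_max_left _ _) hn1
  have h0 : (0:ℝ) < n := by
    have : 1 ≤ n := le_trans (le_max_right _ _) hn1
    exact_mod_cast this
  have := hN n hNn
  rw [Real.dist_eq, sub_zero, abs_of_nonneg (div_nonneg (indsum_nonneg A n) h0.le)] at this
  rw [div_lt_iff₀ h0] at this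
  linarith

lemma limitPts_near {y : ℕ → ℝ} {l : ℝ} (h : l ∈ limitPts y) {ε : ℝ} (hε : 0 < ε) :
    {i | |y i - l| < ε}.Infinite := by
  obtain ⟨k, hk, hten⟩ := h
  rw [Metric.tendsto_atTop] at hten
  obtain ⟨J, hJ⟩ := hten ε hε
  have hsm : StrictMono (fun j : ℕ => k (J + j)) := fun a b hab => hk (by omega)
  refine Set.infinite_of_injective_forall_mem (f := fun j : ℕ => k (J + j))
    hsm.injective (fun j => ?_)
  have := hJ (J + j) (by omega)
  simpa [Real.dist_eq] using this

lemma clusterPt_to_limitPt {y : ℕ → ℝ} {l : ℝ} (h : IdealClusterPt densityZero y l) :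
    l ∈ limitPts y := by
  have h1 : ∀ n : ℕ, ∃ᶠ i in atTop, |y i - l| < 1/(n+1) := by
    intro n
    rw [Nat.frequently_atTop_iff_infinite]
    have hball := h (Metric.ball l (1/(n+1))) (Metric.ball_mem_nhds l (by positivity))
    by_contra hfin
    rw [Set.not_infinite] at hfin
    exact hball (dz_finite (hfin.subset (fun i hi => by
      simpa [Real.dist_eq] using hi)))
  obtain ⟨φ, hφ, hP⟩ := Filter.extraction_forall_of_frequently h1
  refine ⟨φ, hφ, ?_⟩
  rw [tendsto_iff_dist_tendsto_zero]
  refine squeeze_zero (fun n => dist_nonneg) (fun n => ?_)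
    tendsto_one_div_add_atTop_nhds_zero_nat
  exact le_of_lt (by simpa [Function.comp, Real.dist_eq] using hP n)

lemma gamma_closed (y : ℕ → ℝ) : IsClosed {l : ℝ | IdealClusterPt densityZero y l} := by
  rw [← isOpen_compl_iff]
  rw [isOpen_iff_forall_mem_open]
  rintro l hl
  simp only [Set.mem_compl_iff, Set.mem_setOf_eq, IdealClusterPt, not_forall] at hl
  obtain ⟨U, hU, hUmem⟩ := hl
  rw [not_not] at hUmem
  obtain ⟨V, hVU, hVopen, hlV⟩ := mem_nhds_iff.mp hU
  refine ⟨V, fun l' hl' => ?_, hVopen, hlV⟩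
  simp only [Set.mem_compl_iff, Set.mem_setOf_eq, IdealClusterPt, not_forall]
  exact ⟨V, hVopen.mem_nhds hl', not_not.mpr (dz_mono (fun n hn => hVU hn) hUmem)⟩


lemma digit_zero_or_one (ω : ℝ) (i : ℕ) : dyadicDigit ω i = 0 ∨ dyadicDigit ω i = 1 := by
  unfold dyadicDigit
  set y : ℝ := (2:ℝ)^i * ω with hy
  have h2y : (2:ℝ)^(i+1) * ω = 2 * y := by rw [hy]; ring
  rw [h2y]
  have h1 : ⌈(2:ℝ) * y⌉ ≤ 2 * ⌈y⌉ := by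
    apply Int.ceil_le.mpr
    push_cast
    nlinarith [Int.le_ceil y]
  have h2 : 2 * ⌈y⌉ - 2 < ⌈(2:ℝ) * y⌉ := by
    apply Int.lt_ceil.mpr
    push_cast
    nlinarith [Int.ceil_lt_add_one y]
  omega

lemma digitOnes_infinite {ω : ℝ} (_hω : ω ∈ Set.Ioc (0:ℝ) 1) :
    {i | dyadicDigit ω i = 1}.Infinite := by
  by_contra hfin
  rw [Set.not_infinite] at hfin
  obtain ⟨N, hN⟩ := hfin.bddAbove
  have hzero : ∀ i, N < i → dyadicDigit ω i = 0 := by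
    intro i hi
    rcases digit_zero_or_one ω i with h | h
    · exact h
    · exact absurd (hN h) (by omega)
  set c : ℕ → ℤ := fun i => ⌈(2:ℝ)^i * ω⌉ with hc
  have hrec : ∀ j : ℕ, c (N+1+j) = 2^j * (c (N+1) - 1) + 1 := by
    intro j
    induction j with
    | zero => simp
    | succ j ih =>
      have hd := hzero (N+1+j) (by omega)
      unfold dyadicDigit at hd
      have : c (N+1+(j+1)) = 2 * c (N+1+j) - 1 := by
        have he : N+1+(j+1) = (N+1+j)+1 := by omega
        rw [he]; simp only [hc] at hd ⊢; omega
      rw [this, ih]; ring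
  have hlow : ∀ i : ℕ, 2^i * ω ≤ (c i : ℝ) := fun i => Int.le_ceil _
  have hup : ((c (N+1) : ℝ) - 1) < 2^(N+1) * ω := by
    have := Int.ceil_lt_add_one ((2:ℝ)^(N+1) * ω)
    simp only [hc]; linarith
  set δ : ℝ := 2^(N+1)*ω - ((c (N+1) : ℝ) - 1) with hδ
  have hδpos : 0 < δ := by simp only [hδ]; linarith
  obtain ⟨j, hj⟩ := pow_unbounded_of_one_lt (1/δ) (by norm_num : (1:ℝ) < 2)
  have hkey : 2^j * δ ≤ 1 := by
    have h1 : 2^(N+1+j) * ω ≤ (c (N+1+j) : ℝ) := hlow _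
    have h2 : (c (N+1+j) : ℝ) = 2^j * ((c (N+1) : ℝ) - 1) + 1 := by
      have := hrec j
      push_cast [this]
      ring
    have h3 : (2:ℝ)^(N+1+j) = 2^j * 2^(N+1) := by rw [pow_add]; ring
    rw [h2, h3] at h1
    simp only [hδ]
    nlinarith
  have : (1:ℝ)/δ < 2^j := hj
  rw [div_lt_iff₀ hδpos] at this
  nlinarith

lemma cyl_ceil {q k : ℕ} {ω : ℝ} (h1 : (k:ℝ)/2^q < ω) (h2 : ω ≤ (k+1)/2^q)
    {i : ℕ} (hi : i ≤ q) : ⌈(2:ℝ)^i * ω⌉ = (k / 2^(q-i) : ℕ) + 1 := by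
  set m : ℕ := q - i with hm
  set K : ℕ := k / 2^m with hK
  have hqm : q = i + m := by omega
  have h2q : (2:ℝ)^q = 2^i * 2^m := by rw [hqm, pow_add]
  have hpm : (0:ℝ) < 2^m := by positivity
  have hcast : (K:ℝ) ≤ (k:ℝ)/2^m := by
    rw [hK]
    exact_mod_cast Nat.cast_div_le (m := k) (n := 2^m) (α := ℝ)
  have hub : (k:ℝ) + 1 ≤ 2^m * ((K:ℝ) + 1) := by
    have h := Nat.lt_mul_div_succ k (show 0 < 2^m by positivity)
    have h' := Nat.succ_le_of_lt h
    exact_mod_cast h'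
  rw [Int.ceil_eq_iff]
  have hsimp : (((K:ℤ) + 1 : ℤ) : ℝ) = (K:ℝ) + 1 := by push_cast; ring
  rw [hsimp]
  constructor
  · have : (k:ℝ)/2^m < 2^i * ω := by
      rw [div_lt_iff₀ hpm]
      rw [div_lt_iff₀ (show (0:ℝ) < 2^q by positivity)] at h1
      rw [h2q] at h1
      nlinarith
    linarith
  · have : 2^i * ω ≤ ((k:ℝ)+1)/2^m := by
      rw [le_div_iff₀ hpm]
      rw [le_div_iff₀ (show (0:ℝ) < 2^q by positivity)] at h2
      rw [h2q] at h2
      nlinarith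
    rw [le_div_iff₀ hpm] at this
    nlinarith

lemma cyl_digit {q k : ℕ} {ω : ℝ} (h1 : (k:ℝ)/2^q < ω) (h2 : ω ≤ (k+1)/2^q)
    {i : ℕ} (hi : i < q) : dyadicDigit ω i = ((k / 2^(q-1-i)) % 2 : ℕ) := by
  unfold dyadicDigit
  rw [cyl_ceil h1 h2 (show i+1 ≤ q by omega), cyl_ceil h1 h2 (show i ≤ q by omega)]
  have e1 : q - (i+1) = q - 1 - i := by omega
  rw [e1]
  set a : ℕ := k / 2^(q-1-i) with ha
  have e2 : k / 2^(q-i) = a / 2 := by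
    rw [ha, Nat.div_div_eq_div_mul, ← pow_succ]
    congr 2
    omega
  rw [e2]
  have := Nat.div_add_mod a 2
  omega

lemma exists_cylinder {ω : ℝ} (hω : ω ∈ Set.Ioc (0:ℝ) 1) (q : ℕ) :
    ∃ k : ℕ, k < 2^q ∧ (k:ℝ)/2^q < ω ∧ ω ≤ (k+1)/2^q := by
  obtain ⟨hω1, hω2⟩ := hω
  have hp : (0:ℝ) < 2^q := by positivity
  have hc1 : 0 < ⌈(2:ℝ)^q * ω⌉ := Int.ceil_pos.mpr (by positivity)
  have hc2 : ⌈(2:ℝ)^q * ω⌉ ≤ ((2^q : ℕ) : ℤ) := Int.ceil_le.mpr (by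
    push_cast
    nlinarith)
  set z : ℤ := ⌈(2:ℝ)^q * ω⌉ with hz
  have htn : ((z - 1).toNat : ℤ) = z - 1 := Int.toNat_of_nonneg (by omega)
  have htnr : (((z - 1).toNat : ℕ) : ℝ) = ((z:ℝ)) - 1 := by
    exact_mod_cast congrArg (Int.cast : ℤ → ℝ) htn
  refine ⟨(z - 1).toNat, by omega, ?_, ?_⟩
  · rw [div_lt_iff₀ hp, htnr]
    have h1 : (z:ℝ) < 2^q * ω + 1 := by
      have := Int.ceil_lt_add_one ((2:ℝ)^q * ω)
      rw [← hz] at this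
      linarith
    nlinarith
  · rw [le_div_iff₀ hp, htnr]
    have h2 : 2^q * ω ≤ (z:ℝ) := by
      have := Int.le_ceil ((2:ℝ)^q * ω)
      rw [← hz] at this
      exact this
    nlinarith

lemma geom2 (n : ℕ) : ∑ j ∈ Finset.range n, 2^j = 2^n - 1 := by
  induction n with
  | zero => simp
  | succ n ih =>
    rw [Finset.sum_range_succ, ih]
    have : 0 < 2^n := Nat.pow_pos (n := n) (by norm_num)
    omega

/-- low-endian bit extraction from a sum of powers -/
lemma bits_of_sum (q : ℕ) (f : ℕ → Bool) {p : ℕ} (hp : p < q) :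
    (∑ j ∈ Finset.range q, if f j then 2^j else 0) / 2^p % 2 = if f p then 1 else 0 := by
  have hsplit : Finset.range q = Finset.range (p+1) ∪ Finset.Ico (p+1) q := by
    rw [Finset.range_eq_Ico, Finset.range_eq_Ico]
    exact (Finset.Ico_union_Ico_eq_Ico (by omega : 0 ≤ p+1) (by omega : p+1 ≤ q)).symm
  have hdisj : Disjoint (Finset.range (p+1)) (Finset.Ico (p+1) q) := by
    simp [Finset.disjoint_left]
    intro a ha
    omega
  rw [hsplit, Finset.sum_union hdisj, Finset.sum_range_succ]
  set A : ℕ := ∑ j ∈ Finset.range p, if f j then 2^j else 0 with hA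
  have hAlt : A < 2^p := by
    have h1 : A ≤ ∑ j ∈ Finset.range p, 2^j := Finset.sum_le_sum (fun j _ => by split <;> simp)
    have h2 : ∑ j ∈ Finset.range p, 2^j = 2^p - 1 := geom2 p
    have h3 : 0 < 2^p := Nat.pow_pos (n := p) (by norm_num)
    omega
  set c : ℕ := if f p then 2^p else 0 with hc
  have hB : ∑ j ∈ Finset.Ico (p+1) q, (if f j then 2^j else 0)
      = (∑ j ∈ Finset.Ico (p+1) q, if f j then 2^(j-p-1) else 0) * 2^(p+1) := by
    rw [Finset.sum_mul]
    apply Finset.sum_congr rfl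
    intro j hj
    simp only [Finset.mem_Ico] at hj
    split
    · rw [← pow_add]
      congr 1
      omega
    · simp
  set B : ℕ := ∑ j ∈ Finset.Ico (p+1) q, if f j then 2^(j-p-1) else 0 with hBdef
  rw [hB]
  have hrw : A + c + B * 2^(p+1) = A + ((if f p then 1 else 0) + 2*B) * 2^p := by
    rw [hc]
    split <;> ring
  rw [hrw, Nat.add_mul_div_right _ _ (Nat.pow_pos (n := p) (by norm_num)),
    Nat.div_eq_of_lt hAlt]
  split <;> omega

lemma sum_of_bits_lt (q : ℕ) (f : ℕ → Bool) :
    (∑ j ∈ Finset.range q, if f j then 2^j else 0) < 2^q := by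
  have h1 : (∑ j ∈ Finset.range q, if f j then 2^j else 0) ≤ ∑ j ∈ Finset.range q, 2^j :=
    Finset.sum_le_sum (fun j _ => by split <;> simp)
  have h2 : ∑ j ∈ Finset.range q, 2^j = 2^q - 1 := geom2 q
  have h3 : 0 < 2^q := Nat.pow_pos (n := q) (by norm_num)
  omega

/-- binary reconstruction -/
lemma sum_bits_eq (q : ℕ) : ∀ k : ℕ, k < 2^q →
    (∑ p ∈ Finset.range q, (k / 2^p % 2) * 2^p) = k := by
  induction q with
  | zero => intro k hk; interval_cases k; simp
  | succ n ih =>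
    intro k hk
    rw [Finset.sum_range_succ']
    simp only [pow_zero, Nat.div_one, mul_one, pow_succ]
    have hrw : ∀ p : ℕ, k / 2^(p+1) % 2 * (2^p * 2) = ((k/2) / 2^p % 2 * 2^p) * 2 := by
      intro p
      rw [pow_succ']
      rw [← Nat.div_div_eq_div_mul]
      ring
    calc (∑ p ∈ Finset.range n, k / 2^(p+1) % 2 * (2^p*2)) + k % 2
        = (∑ p ∈ Finset.range n, (k/2) / 2^p % 2 * 2^p) * 2 + k % 2 := by
          rw [Finset.sum_mul]
          congr 1
          exact Finset.sum_congr rfl (fun p _ => hrw p)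
      _ = (k/2) * 2 + k % 2 := by
          rw [ih (k/2) (by omega)]
      _ = k := by omega

def ofWord (q : ℕ) (d : ℕ → Bool) : ℕ :=
  ∑ i ∈ Finset.range q, if d i then 2^(q-1-i) else 0

lemma ofWord_eq_sum_bits (q : ℕ) (d : ℕ → Bool) :
    ofWord q d = ∑ j ∈ Finset.range q, if d (q-1-j) then 2^j else 0 := by
  rw [ofWord, ← Finset.sum_range_reflect]
  apply Finset.sum_congr rfl
  intro i hi
  simp only [Finset.mem_range] at hi
  have : q - 1 - (q - 1 - i) = i := by omega
  rw [this]

lemma ofWord_lt (q : ℕ) (d : ℕ → Bool) : ofWord q d < 2^q := by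
  rw [ofWord_eq_sum_bits]
  exact sum_of_bits_lt q _

lemma ofWord_bits (q : ℕ) (d : ℕ → Bool) {i : ℕ} (hi : i < q) :
    ofWord q d / 2^(q-1-i) % 2 = if d i then 1 else 0 := by
  rw [ofWord_eq_sum_bits]
  have h := bits_of_sum q (fun j => d (q-1-j)) (p := q-1-i) (by omega)
  rw [h]
  have : q - 1 - (q - 1 - i) = i := by omega
  simp only [this]

lemma ofWord_congr (q : ℕ) {d d' : ℕ → Bool} (h : ∀ i < q, d i = d' i) :
    ofWord q d = ofWord q d' := by
  unfold ofWord
  apply Finset.sum_congr rfl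
  intro i hi
  simp only [Finset.mem_range] at hi
  rw [h i hi]

lemma ofWord_reconstruct (q k : ℕ) (hk : k < 2^q) :
    ofWord q (fun i => decide (k / 2^(q-1-i) % 2 = 1)) = k := by
  rw [ofWord_eq_sum_bits]
  have : ∀ j ∈ Finset.range q,
      (if (fun i => decide (k / 2^(q-1-i) % 2 = 1)) (q-1-j) then 2^j else 0)
        = (k / 2^j % 2) * 2^j := by
    intro j hj
    simp only [Finset.mem_range] at hj
    have he : q - 1 - (q - 1 - j) = j := by omega
    simp only [he, decide_eq_true_eq]
    have hb : k / 2^j % 2 = 0 ∨ k / 2^j % 2 = 1 := by omega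
    rcases hb with hb | hb <;> simp [hb]
  rw [Finset.sum_congr rfl this, sum_bits_eq q k hk]

lemma ofWord_split {q₀ q : ℕ} (hq : q₀ ≤ q) (d : ℕ → Bool) :
    ofWord q d = 2^(q-q₀) * ofWord q₀ d
      + ∑ i ∈ Finset.Ico q₀ q, (if d i then 2^(q-1-i) else 0) := by
  unfold ofWord
  have hsplit : Finset.range q = Finset.range q₀ ∪ Finset.Ico q₀ q := by
    rw [Finset.range_eq_Ico, Finset.range_eq_Ico]
    exact (Finset.Ico_union_Ico_eq_Ico (by omega : 0 ≤ q₀) (by omega : q₀ ≤ q)).symm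
  have hdisj : Disjoint (Finset.range q₀) (Finset.Ico q₀ q) := by
    simp [Finset.disjoint_left]
    intro a ha
    omega
  rw [hsplit, Finset.sum_union hdisj, Finset.mul_sum]
  congr 1
  apply Finset.sum_congr rfl
  intro i hi
  simp only [Finset.mem_range] at hi
  split
  · rw [← pow_add]
    congr 1
    omega
  · simp

lemma tail_lt {q₀ q : ℕ} (hq : q₀ ≤ q) (d : ℕ → Bool) :
    (∑ i ∈ Finset.Ico q₀ q, if d i then 2^(q-1-i) else 0) < 2^(q-q₀) := by
  set t : ℕ := q - q₀ with ht
  have h1 : (∑ i ∈ Finset.Ico q₀ q, if d i then 2^(q-1-i) else 0)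
      ≤ ∑ i ∈ Finset.Ico q₀ q, 2^(q-1-i) :=
    Finset.sum_le_sum (fun i _ => by split <;> simp)
  have h2 : ∑ i ∈ Finset.Ico q₀ q, (2:ℕ)^(q-1-i) = ∑ j ∈ Finset.range t, 2^(t-1-j) := by
    rw [Finset.sum_Ico_eq_sum_range]
    apply Finset.sum_congr (by rw [ht]) (fun j hj => by
      simp only [Finset.mem_range] at hj
      congr 1
      omega)
  have h3 : ∑ j ∈ Finset.range t, (2:ℕ)^(t-1-j) = 2^t - 1 := by
    rw [Finset.sum_range_reflect (fun j => (2:ℕ)^j) t, geom2]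
  have h4 : 0 < 2^t := Nat.pow_pos (n := t) (by norm_num)
  omega

open Classical in
lemma exists_good_subcyl (x : ℕ → ℝ) (l ε : ℝ) (hinf : {i : ℕ | |x i - l| < ε}.Infinite)
    (N q₀ k₀ : ℕ) (hk₀lt : k₀ < 2^q₀) :
    ∃ q k : ℕ, k < 2^q ∧
      (k₀:ℝ)/2^q₀ ≤ (k:ℝ)/2^q ∧ ((k:ℝ)+1)/2^q ≤ ((k₀:ℝ)+1)/2^q₀ ∧
      N ≤ ((Finset.range q).filter (fun i => k/2^(q-1-i)%2 = 1)).card ∧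
      ((Finset.range q).filter (fun i => k/2^(q-1-i)%2 = 1)).card
        ≤ 2 * ((Finset.range q).filter
            (fun i => k/2^(q-1-i)%2 = 1 ∧ |x i - l| < ε)).card := by
  classical
  have hp₀ : (0:ℝ) < 2^q₀ := by positivity
  set d₀ : ℕ → Bool := fun i => decide (k₀ / 2^(q₀-1-i) % 2 = 1) with hd₀
  have hrec : ofWord q₀ d₀ = k₀ := ofWord_reconstruct q₀ k₀ hk₀lt
  set K := ((Finset.range q₀).filter (fun i => d₀ i = true)).card with hK
  have hKle : K ≤ q₀ := le_trans (Finset.card_filter_le _ _) (by simp)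
  set t := N + q₀ + 1 with ht
  have hGinf : ({i : ℕ | |x i - l| < ε} ∩ Set.Ici q₀).Infinite := by
    have he : {i : ℕ | |x i - l| < ε} \ Set.Iio q₀
        = {i : ℕ | |x i - l| < ε} ∩ Set.Ici q₀ := by
      ext i; simp [Set.mem_diff, not_lt]
    rw [← he]
    exact hinf.diff (Set.finite_Iio q₀)
  obtain ⟨s, hs_sub, hs_card⟩ := hGinf.exists_subset_card_eq t
  have hs_ne : s.Nonempty := Finset.card_pos.mp (by omega)
  set q := s.max' hs_ne + 1 with hq
  have hsq : ∀ i ∈ s, i < q := fun i hi => by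
    have := Finset.le_max' s i hi; omega
  have hs_ge : ∀ i ∈ s, q₀ ≤ i := fun i hi => (hs_sub hi).2
  have hs_good : ∀ i ∈ s, |x i - l| < ε := fun i hi => (hs_sub hi).1
  have hq₀q : q₀ ≤ q := by
    obtain ⟨i, hi⟩ := hs_ne
    have h1 := hs_ge i hi; have h2 := hsq i hi; omega
  set d : ℕ → Bool := fun i => if i < q₀ then d₀ i else decide (i ∈ s) with hd
  set k := ofWord q d with hk
  have hklt : k < 2^q := ofWord_lt q d
  have hdq₀ : ofWord q₀ d = ofWord q₀ d₀ :=
    ofWord_congr q₀ (fun i hi => by simp [hd, hi])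
  have hsplit := ofWord_split hq₀q d
  have htail := tail_lt hq₀q d
  have hlow : 2^(q-q₀) * k₀ ≤ k := by
    rw [hk, hsplit, hdq₀, hrec]; exact Nat.le_add_right _ _
  have hhigh : k + 1 ≤ 2^(q-q₀) * (k₀+1) := by
    have e : 2^(q-q₀) * (k₀+1) = 2^(q-q₀)*k₀ + 2^(q-q₀) := by ring
    rw [e, hk, hsplit, hdq₀, hrec, Nat.add_assoc]
    exact Nat.add_le_add_left (by omega) _
  have hpq : (0:ℝ) < 2^q := by positivity
  have hpowsplit : (2:ℝ)^q = 2^(q-q₀)*2^q₀ := by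
    rw [← pow_add]; congr 1; omega
  have hlowR : ((2:ℝ)^(q-q₀) * k₀) ≤ (k:ℝ) := by exact_mod_cast hlow
  have hhighR : (k:ℝ) + 1 ≤ 2^(q-q₀) * ((k₀:ℝ)+1) := by exact_mod_cast hhigh
  have hrlow : (k₀:ℝ)/2^q₀ ≤ (k:ℝ)/2^q := by
    rw [div_le_div_iff₀ hp₀ hpq, hpowsplit]
    nlinarith
  have hrhigh : ((k:ℝ)+1)/2^q ≤ ((k₀:ℝ)+1)/2^q₀ := by
    rw [div_le_div_iff₀ hpq hp₀, hpowsplit]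
    nlinarith
  have hbits : ∀ i, i < q → (k/2^(q-1-i)%2 = 1 ↔ d i = true) := by
    intro i hi
    rw [hk, ofWord_bits q d hi]
    split
    · simp_all
    · rename_i h; simp [h]
  have hfilter_eq : (Finset.range q).filter (fun i => k/2^(q-1-i)%2 = 1)
      = (Finset.range q).filter (fun i => d i = true) :=
    Finset.filter_congr (fun i hi => by
      rw [hbits i (Finset.mem_range.1 hi)])
  have hsplit2 : (Finset.range q).filter (fun i => d i = true)
      = ((Finset.range q₀).filter (fun i => d₀ i = true)) ∪ s := by
    ext i
    simp only [Finset.mem_filter, Finset.mem_range, Finset.mem_union]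
    constructor
    · rintro ⟨hiq, hdi⟩
      by_cases hi₀ : i < q₀
      · left; refine ⟨hi₀, ?_⟩
        simpa [hd, hi₀] using hdi
      · right
        simp only [hd, hi₀, if_false, decide_eq_true_eq] at hdi
        exact hdi
    · rintro (⟨hi₀, hdi⟩ | his)
      · exact ⟨by omega, by simp [hd, hi₀, hdi]⟩
      · refine ⟨hsq i his, ?_⟩
        have : ¬ i < q₀ := not_lt.mpr (hs_ge i his)
        simp [hd, this, his]
  have hdisj2 : Disjoint ((Finset.range q₀).filter (fun i => d₀ i = true)) s := by
    rw [Finset.disjoint_left]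
    intro i hi his
    simp only [Finset.mem_filter, Finset.mem_range] at hi
    exact absurd (hs_ge i his) (by omega)
  have hcntkq : ((Finset.range q).filter (fun i => k/2^(q-1-i)%2 = 1)).card = K + t := by
    rw [hfilter_eq, hsplit2, Finset.card_union_of_disjoint hdisj2, ← hK, hs_card]
  have hgcnt_ge : t ≤ ((Finset.range q).filter
      (fun i => k/2^(q-1-i)%2 = 1 ∧ |x i - l| < ε)).card := by
    rw [← hs_card]
    apply Finset.card_le_card
    intro i his
    simp only [Finset.mem_filter, Finset.mem_range]
    refine ⟨hsq i his, ?_, hs_good i his⟩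
    rw [hbits i (hsq i his)]
    have : ¬ i < q₀ := not_lt.mpr (hs_ge i his)
    simp [hd, this, his]
  exact ⟨q, k, hklt, hrlow, hrhigh, by omega, by omega⟩

open Classical in
lemma good_dense_open (x : ℕ → ℝ) (l ε : ℝ) (hε : 0 < ε)
    (hinf : {i : ℕ | |x i - l| < ε}.Infinite) (N : ℕ) :
    ∃ U : Set ℝ, IsOpen U ∧
      (∀ ω₀ ∈ Set.Ioc (0:ℝ) 1, ∀ δ : ℝ, 0 < δ → ∃ ω ∈ U ∩ Set.Ioc (0:ℝ) 1, |ω - ω₀| < δ) ∧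
      (∀ ω ∈ U ∩ Set.Ioc (0:ℝ) 1, ∃ n, N ≤ n ∧
        (n:ℝ) ≤ 2 * ∑ j ∈ Finset.range n, (if |subseq x ω j - l| < ε then (1:ℝ) else 0)) := by
  classical
  set cnt : ℕ → ℕ → ℕ :=
    fun k q => ((Finset.range q).filter (fun i => k/2^(q-1-i)%2 = 1)).card with hcnt
  set gcnt : ℕ → ℕ → ℕ :=
    fun k q => ((Finset.range q).filter
      (fun i => k/2^(q-1-i)%2 = 1 ∧ |x i - l| < ε)).card with hgcnt
  set Good : ℕ → ℕ → Prop :=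
    fun k q => k < 2^q ∧ N ≤ cnt k q ∧ cnt k q ≤ 2 * gcnt k q with hGood
  refine ⟨⋃ (p : ℕ × ℕ) (_ : Good p.1 p.2), Set.Ioo ((p.1:ℝ)/2^p.2) ((p.1+1)/2^p.2),
    isOpen_iUnion (fun p => isOpen_iUnion (fun _ => isOpen_Ioo)), ?_, ?_⟩
  · -- density
    intro ω₀ hω₀ δ hδ
    obtain ⟨q₀, hq₀⟩ := pow_unbounded_of_one_lt (1/δ) (by norm_num : (1:ℝ) < 2)
    have hp₀ : (0:ℝ) < 2^q₀ := by positivity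
    have hq₀δ : (1:ℝ)/2^q₀ < δ := by
      rw [div_lt_iff₀ hδ] at hq₀
      rw [div_lt_iff₀ hp₀]
      nlinarith
    obtain ⟨k₀, hk₀lt, hc1, hc2⟩ := exists_cylinder hω₀ q₀
    obtain ⟨q, k, hklt, hrlow, hrhigh, hNle, hcg⟩ :=
      exists_good_subcyl x l ε hinf N q₀ k₀ hk₀lt
    have hgood : Good k q := ⟨hklt, hNle, hcg⟩
    have hpq : (0:ℝ) < 2^q := by positivity
    set ω : ℝ := ((k:ℝ)/2^q + ((k:ℝ)+1)/2^q)/2 with hω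
    have hstep : (k:ℝ)/2^q < ((k:ℝ)+1)/2^q := by
      rw [div_lt_div_iff₀ hpq hpq]; nlinarith
    have hω1 : (k:ℝ)/2^q < ω := by rw [hω]; linarith
    have hω2 : ω < ((k:ℝ)+1)/2^q := by rw [hω]; linarith
    have hωIoc : ω ∈ Set.Ioc (0:ℝ) 1 := by
      constructor
      · have h0 : (0:ℝ) ≤ (k:ℝ)/2^q := by positivity
        linarith
      · have hk1 : ((k:ℝ)+1)/2^q ≤ 1 := by
          rw [div_le_one hpq]
          exact_mod_cast hklt
        linarith
    refine ⟨ω, ⟨?_, hωIoc⟩, ?_⟩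
    · rw [Set.mem_iUnion]
      exact ⟨(k, q), Set.mem_iUnion.mpr ⟨hgood, ⟨hω1, hω2⟩⟩⟩
    · have hωlow : (k₀:ℝ)/2^q₀ < ω := lt_of_le_of_lt hrlow hω1
      have hωhigh : ω ≤ ((k₀:ℝ)+1)/2^q₀ := le_trans (le_of_lt hω2) hrhigh
      have hlen : ((k₀:ℝ)+1)/2^q₀ - (k₀:ℝ)/2^q₀ = 1/2^q₀ := by
        field_simp
        ring
      rw [abs_lt]
      constructor <;> nlinarith
  · -- sufficiency
    rintro ω ⟨hωU, hωIoc⟩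
    rw [Set.mem_iUnion] at hωU
    obtain ⟨⟨k, q⟩, hωU⟩ := hωU
    rw [Set.mem_iUnion] at hωU
    obtain ⟨hgood, hωIoo⟩ := hωU
    obtain ⟨hk2, hN, hcg⟩ := hgood
    obtain ⟨hω1, hω2⟩ := hωIoo
    set P : ℕ → Prop := fun i => dyadicDigit ω i = 1 with hP
    have hPiff : ∀ i, i < q → (P i ↔ k/2^(q-1-i)%2 = 1) := by
      intro i hi
      rw [hP]
      simp only []
      rw [cyl_digit hω1 (le_of_lt hω2) hi]
      constructor
      · intro h; exact_mod_cast h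
      · intro h; rw [h]; norm_num
    set n := cnt k q with hn
    refine ⟨n, hN, ?_⟩
    have hcount : Nat.count P q = n := by
      rw [Nat.count_eq_card_filter_range]
      rw [hn, hcnt]
      simp only []
      congr 1
      exact Finset.filter_congr (fun i hi => by
        rw [hPiff i (Finset.mem_range.1 hi)])
    have hsum : (∑ j ∈ Finset.range n, if |subseq x ω j - l| < ε then (1:ℝ) else 0)
        = (((Finset.range n).filter (fun j => |x (Nat.nth P j) - l| < ε)).card : ℝ) := by
      rw [Finset.sum_boole]
      congr 1
    have hineq : gcnt k q ≤ ((Finset.range n).filter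
        (fun j => |x (Nat.nth P j) - l| < ε)).card := by
      rw [hgcnt]
      simp only []
      apply Finset.card_le_card_of_injOn (fun i => Nat.count P i)
      · intro i hi
        simp only [Finset.mem_coe, Finset.mem_filter, Finset.mem_range] at hi ⊢
        obtain ⟨hiq, hbit, hx⟩ := hi
        have hPi : P i := (hPiff i hiq).2 hbit
        refine ⟨by rw [← hcount]; exact Nat.count_strict_mono hPi hiq, ?_⟩
        rw [Nat.nth_count hPi]
        exact hx
      · intro a ha b hb hab
        simp only [Finset.coe_filter, Set.mem_setOf_eq, Finset.mem_range] at ha hb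
        exact Nat.count_injective ((hPiff a ha.1).2 ha.2.1) ((hPiff b hb.1).2 hb.2.1) hab
    rw [hsum]
    have h1 : (n:ℝ) ≤ 2 * (gcnt k q : ℝ) := by exact_mod_cast hcg
    have h2 : ((gcnt k q : ℕ):ℝ) ≤ (((Finset.range n).filter
        (fun j => |x (Nat.nth P j) - l| < ε)).card : ℝ) := by exact_mod_cast hineq
    linarith

-- Piece: subsequence limit points
lemma gammaSub_subset_limitPts (x : ℕ → ℝ) (ω : ℝ) (hω : ω ∈ Set.Ioc (0:ℝ) 1) :
    {l : ℝ | IdealClusterPt densityZero (subseq x ω) l} ⊆ limitPts x := by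
  intro l hl
  obtain ⟨φ, hφ, hten⟩ := clusterPt_to_limitPt hl
  refine ⟨(Nat.nth (fun i => dyadicDigit ω i = 1)) ∘ φ,
    (Nat.nth_strictMono (digitOnes_infinite hω)).comp hφ, ?_⟩
  exact hten

-- meager transfer machinery
lemma nwd_image {t : Set (Set.Ioc (0:ℝ) 1)} (h : IsNowhereDense t) :
    IsNowhereDense ((↑) '' t : Set ℝ) := by
  by_contra hne
  rw [IsNowhereDense, ← Set.not_nonempty_iff_eq_empty, not_not] at hne
  obtain ⟨z, hz⟩ := hne
  obtain ⟨ε, hε, hball⟩ := Metric.isOpen_iff.mp isOpen_interior z hz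
  have hsub1 : closure ((↑) '' t : Set ℝ) ⊆ Set.Icc 0 1 := by
    have h1 : ((↑) '' t : Set ℝ) ⊆ Set.Ioc 0 1 := by
      rintro _ ⟨y, _, rfl⟩; exact y.2
    calc closure ((↑) '' t : Set ℝ) ⊆ closure (Set.Ioc 0 1) := closure_mono h1
      _ = Set.Icc 0 1 := closure_Ioc (by norm_num)
  have hballsub : Metric.ball z ε ⊆ Set.Icc 0 1 :=
    (hball.trans interior_subset).trans hsub1
  have hinf : (Metric.ball z ε).Infinite := by
    rw [Real.ball_eq_Ioo]
    exact Set.Ioo_infinite (by linarith)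
  obtain ⟨w, hwball, hw01⟩ :=
    (hinf.diff ((Set.finite_singleton (1:ℝ)).insert 0)).nonempty
  have hwIcc : w ∈ Set.Icc (0:ℝ) 1 := hballsub hwball
  have hwIoo : w ∈ Set.Ioo (0:ℝ) 1 := by
    simp only [Set.mem_insert_iff, Set.mem_singleton_iff, not_or] at hw01
    constructor
    · rcases lt_or_eq_of_le hwIcc.1 with h' | h'
      · exact h'
      · exact absurd h'.symm hw01.1
    · rcases lt_or_eq_of_le hwIcc.2 with h' | h'
      · exact h'
      · exact absurd h' hw01.2
  set W : Set ℝ := interior (closure ((↑) '' t : Set ℝ)) ∩ Set.Ioo 0 1 with hW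
  have hWopen : IsOpen W := isOpen_interior.inter isOpen_Ioo
  have hwW : w ∈ W := ⟨hball hwball, hwIoo⟩
  have hWsub : (((↑) ⁻¹' W) : Set (Set.Ioc (0:ℝ) 1)) ⊆ closure t := by
    intro y hy
    rw [closure_subtype]
    exact interior_subset hy.1
  have hopen2 : IsOpen (((↑) ⁻¹' W) : Set (Set.Ioc (0:ℝ) 1)) :=
    hWopen.preimage continuous_subtype_val
  have hsub3 : (((↑) ⁻¹' W) : Set (Set.Ioc (0:ℝ) 1)) ⊆ interior (closure t) :=
    hopen2.subset_interior_iff.mpr hWsub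
  rw [h] at hsub3
  exact hsub3 (show (⟨w, Set.Ioo_subset_Ioc_self hwIoo⟩ : Set.Ioc (0:ℝ) 1) ∈ _ from hwW)

lemma meagre_image {S : Set (Set.Ioc (0:ℝ) 1)} (h : IsMeagre S) :
    IsMeagre ((↑) '' S : Set ℝ) := by
  rw [isMeagre_iff_countable_union_isNowhereDense] at h ⊢
  obtain ⟨C, hCnwd, hCcount, hCsub⟩ := h
  refine ⟨(fun t => (↑) '' t : Set (Set.Ioc (0:ℝ) 1) → Set ℝ) '' C,
    ?_, hCcount.image _, ?_⟩
  · rintro _ ⟨u, hu, rfl⟩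
    exact nwd_image (hCnwd u hu)
  · rintro _ ⟨y, hy, rfl⟩
    obtain ⟨u, hu, hyu⟩ := hCsub hy
    exact ⟨(↑) '' u, ⟨u, hu, rfl⟩, ⟨y, hyu, rfl⟩⟩

lemma isMeagre_union {α : Type*} [TopologicalSpace α] {s u : Set α}
    (hs : IsMeagre s) (hu : IsMeagre u) : IsMeagre (s ∪ u) := by
  rw [IsMeagre, Set.compl_union]
  exact Filter.inter_mem hs hu

lemma residual_not_meagre {S : Set (Set.Ioc (0:ℝ) 1)} (hres : S ∈ residual _)
    (hm : IsMeagre S) : False := by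
  have hmc : IsMeagre Sᶜ := by rw [IsMeagre, compl_compl]; exact hres
  have h1 : IsMeagre ((↑) '' S ∪ (↑) '' Sᶜ : Set ℝ) :=
    isMeagre_union (meagre_image hm) (meagre_image hmc)
  have h2 : ((↑) '' S ∪ (↑) '' Sᶜ : Set ℝ) = Set.Ioc 0 1 := by
    rw [← Set.image_union, Set.union_compl_self, Set.image_univ,
      Subtype.range_coe]
  rw [h2] at h1
  have h3 : Dense ((Set.Ioc (0:ℝ) 1)ᶜ) := dense_of_mem_residual h1
  rw [← interior_eq_empty_iff_dense_compl] at h3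
  rw [interior_Ioc] at h3
  have : (1/2 : ℝ) ∈ Set.Ioo (0:ℝ) 1 := by norm_num
  rw [h3] at this
  exact this

open Classical in
lemma T_mem_residual (x : ℕ → ℝ) (l ε : ℝ) (hε : 0 < ε)
    (hinf : {i : ℕ | |x i - l| < ε}.Infinite) :
    {ω : Set.Ioc (0:ℝ) 1 | {j | |subseq x ↑ω j - l| < ε} ∉ densityZero}
      ∈ residual (Set.Ioc (0:ℝ) 1) := by
  classical
  have hU : ∀ N : ℕ, ∃ V : Set (Set.Ioc (0:ℝ) 1), IsOpen V ∧ Dense V ∧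
      ∀ ω ∈ V, ∃ n, N ≤ n ∧ (n:ℝ) ≤ 2 * ∑ j ∈ Finset.range n,
        (if |subseq x ↑ω j - l| < ε then (1:ℝ) else 0) := by
    intro N
    obtain ⟨U, hUopen, hUdense, hUsuff⟩ := good_dense_open x l ε hε hinf N
    refine ⟨(↑) ⁻¹' U, hUopen.preimage continuous_subtype_val, ?_, ?_⟩
    · rw [dense_iff_inter_open]
      rintro o ho ⟨ω₀, hω₀o⟩
      obtain ⟨O, hOopen, rfl⟩ := isOpen_induced_iff.mp ho
      obtain ⟨δ, hδ, hball⟩ := Metric.isOpen_iff.mp hOopen ω₀ hω₀o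
      obtain ⟨ω, ⟨hωU, hωIoc⟩, hωδ⟩ := hUdense ω₀.1 ω₀.2 δ hδ
      refine ⟨⟨ω, hωIoc⟩, ⟨?_, hωU⟩⟩
      apply hball
      rw [Metric.mem_ball, Real.dist_eq]
      exact hωδ
    · intro ω hω
      exact hUsuff ↑ω ⟨hω, ω.2⟩
  choose V hVopen hVdense hVsuff using hU
  have hres : (⋂ N, V N) ∈ residual (Set.Ioc (0:ℝ) 1) := by
    apply countable_iInter_mem.mpr
    intro N
    rw [mem_residual_iff]
    exact ⟨{V N}, by simp [hVopen N], by simp [hVdense N], Set.countable_singleton _, by simp⟩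
  refine Filter.mem_of_superset hres ?_
  intro ω hω
  simp only [Set.mem_iInter] at hω
  simp only [Set.mem_setOf_eq]
  apply dz_not_mem
  intro N
  obtain ⟨n, hn1, hn2⟩ := hVsuff N ω (hω N)
  refine ⟨n, hn1, le_trans hn2 (le_of_eq ?_)⟩
  congr 1

lemma R_residual (x : ℕ → ℝ) :
    ∃ R : Set (Set.Ioc (0:ℝ) 1), R ∈ residual (Set.Ioc (0:ℝ) 1) ∧
      ∀ ω ∈ R, limitPts x ⊆ {l : ℝ | IdealClusterPt densityZero (subseq x ↑ω) l} := by
  classical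
  set S : ℚ × ℕ → Set (Set.Ioc (0:ℝ) 1) := fun p =>
    if {i : ℕ | |x i - (p.1:ℝ)| < 1/(p.2+1)}.Infinite
    then {ω | {j | |subseq x ↑ω j - (p.1:ℝ)| < 1/(p.2+1)} ∉ densityZero}
    else Set.univ with hS
  have hSres : ∀ p, S p ∈ residual (Set.Ioc (0:ℝ) 1) := by
    intro p
    rw [hS]
    simp only []
    split
    · exact T_mem_residual x p.1 (1/(p.2+1)) (by positivity) ‹_›
    · exact Filter.univ_mem
  refine ⟨⋂ p, S p, countable_iInter_mem.mpr hSres, ?_⟩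
  intro ω hω l hl
  intro U hU
  obtain ⟨ε', hε', hballU⟩ := Metric.mem_nhds_iff.mp hU
  obtain ⟨m, hm⟩ := exists_nat_gt (2/ε')
  have hε2 : 2/((m:ℝ)+1) < ε' := by
    rw [div_lt_iff₀ (by positivity)]
    rw [div_lt_iff₀ hε'] at hm
    nlinarith
  obtain ⟨r, hr⟩ := exists_rat_near l (show (0:ℝ) < 1/(2*((m:ℝ)+1)) by positivity)
  have hinf : {i : ℕ | |x i - (r:ℝ)| < 1/((m:ℕ)+1)}.Infinite := by
    have hsub : {i : ℕ | |x i - l| < 1/(2*((m:ℝ)+1))}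
        ⊆ {i : ℕ | |x i - (r:ℝ)| < 1/((m:ℕ)+1)} := by
      intro i hi
      simp only [Set.mem_setOf_eq] at hi ⊢
      have h1 : |x i - (r:ℝ)| ≤ |x i - l| + |l - (r:ℝ)| := abs_sub_le _ _ _
      have he : 1/(2*((m:ℝ)+1)) + 1/(2*((m:ℝ)+1)) = 1/((m:ℝ)+1) := by
        rw [← add_div]
        rw [div_eq_div_iff (by positivity) (by positivity)]
        ring
      push_cast
      linarith
    exact Set.Infinite.mono hsub
      (limitPts_near hl (show (0:ℝ) < 1/(2*((m:ℝ)+1)) by positivity))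
  have hp := Set.mem_iInter.mp hω (r, m)
  rw [hS] at hp
  simp only [] at hp
  rw [if_pos hinf] at hp
  simp only [Set.mem_setOf_eq] at hp
  intro hdz
  apply hp
  apply dz_mono ?_ hdz
  intro j hj
  simp only [Set.mem_setOf_eq] at hj ⊢
  apply hballU
  rw [Metric.mem_ball, Real.dist_eq]
  have h1 : |subseq x (↑ω) j - l| ≤ |subseq x (↑ω) j - (r:ℝ)| + |(r:ℝ) - l| :=
    abs_sub_le _ _ _
  have hrl : |(r:ℝ) - l| < 1/(2*((m:ℝ)+1)) := by rw [abs_sub_comm]; exact hr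
  have h3 : 1/(2*((m:ℝ)+1)) ≤ 1/((m:ℝ)+1) := by
    apply div_le_div_of_nonneg_left (by norm_num) (by positivity)
    nlinarith
  push_cast at hj
  have h4 : (2:ℝ)/((m:ℝ)+1) = 1/((m:ℝ)+1) + 1/((m:ℝ)+1) := by ring
  linarith

theorem statistical_cluster_main' (x : ℕ → ℝ) :
    (IsMeagre {ω : Set.Ioc (0:ℝ) 1 |
        {l : ℝ | IdealClusterPt densityZero (subseq x ↑ω) l} ≠
          {l : ℝ | IdealClusterPt densityZero x l}} ↔
      ¬ IsMeagre {ω : Set.Ioc (0:ℝ) 1 |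
        {l : ℝ | IdealClusterPt densityZero (subseq x ↑ω) l} =
          {l : ℝ | IdealClusterPt densityZero x l}}) ∧
    (¬ IsMeagre {ω : Set.Ioc (0:ℝ) 1 |
        {l : ℝ | IdealClusterPt densityZero (subseq x ↑ω) l} =
          {l : ℝ | IdealClusterPt densityZero x l}} ↔
      limitPts x ⊆ {l : ℝ | IdealClusterPt densityZero x l}) := by
  classical
  set Γ : Set ℝ := {l : ℝ | IdealClusterPt densityZero x l} with hΓ
  set E : Set (Set.Ioc (0:ℝ) 1) :=
    {ω : Set.Ioc (0:ℝ) 1 | {l : ℝ | IdealClusterPt densityZero (subseq x ↑ω) l} = Γ} with hE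
  have hcomplE : {ω : Set.Ioc (0:ℝ) 1 |
      {l : ℝ | IdealClusterPt densityZero (subseq x ↑ω) l} ≠ Γ} = Eᶜ := by
    ext ω
    simp [hE]
  rw [hcomplE]
  obtain ⟨R, hRres, hRsub⟩ := R_residual x
  have hsub1 : ∀ ω : Set.Ioc (0:ℝ) 1,
      {l : ℝ | IdealClusterPt densityZero (subseq x ↑ω) l} ⊆ limitPts x :=
    fun ω => gammaSub_subset_limitPts x ↑ω ω.2
  have hsub2 : Γ ⊆ limitPts x := fun l hl => clusterPt_to_limitPt hl
  by_cases hL : limitPts x ⊆ Γ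
  · have hRE : R ⊆ E := by
      intro ω hω
      have h1 : {l : ℝ | IdealClusterPt densityZero (subseq x ↑ω) l} ⊆ Γ :=
        (hsub1 ω).trans hL
      have h2 : Γ ⊆ {l : ℝ | IdealClusterPt densityZero (subseq x ↑ω) l} :=
        hsub2.trans (hRsub ω hω)
      exact subset_antisymm h1 h2
    have hEres : E ∈ residual (Set.Ioc (0:ℝ) 1) := Filter.mem_of_superset hRres hRE
    have hmeagreC : IsMeagre Eᶜ := by rw [IsMeagre, compl_compl]; exact hEres
    have hnotE : ¬ IsMeagre E := fun h => residual_not_meagre hEres h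
    exact ⟨⟨fun _ => hnotE, fun _ => hmeagreC⟩, ⟨fun _ => hL, fun _ => hnotE⟩⟩
  · obtain ⟨l₀, hl₀L, hl₀Γ⟩ := Set.not_subset.mp hL
    have hRC : R ⊆ Eᶜ := by
      intro ω hω hEω
      have : l₀ ∈ {l : ℝ | IdealClusterPt densityZero (subseq x ↑ω) l} := hRsub ω hω hl₀L
      rw [hEω] at this
      exact hl₀Γ this
    have hCres : Eᶜ ∈ residual (Set.Ioc (0:ℝ) 1) := Filter.mem_of_superset hRres hRC
    have hmE : IsMeagre E := hCres
    have hnotC : ¬ IsMeagre Eᶜ := fun h => residual_not_meagre hCres h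
    exact ⟨⟨fun h => (hnotC h).elim, fun h => (h hmE).elim⟩,
      ⟨fun h => (h hmE).elim, fun h => (hL h).elim⟩⟩

end Aux

/-- For a real sequence `x`, the set of `ω` preserving the statistical cluster
points is comeager iff it is nonmeager, iff every ordinary limit point of `x`
is a statistical cluster point of `x`. -/
theorem statistical_cluster_main (x : ℕ → ℝ) :
    (IsMeagre {ω : Set.Ioc (0:ℝ) 1 |
        {l : ℝ | IdealClusterPt densityZero (subseq x ↑ω) l} ≠
          {l : ℝ | IdealClusterPt densityZero x l}} ↔
      ¬ IsMeagre {ω : Set.Ioc (0:ℝ) 1 |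
        {l : ℝ | IdealClusterPt densityZero (subseq x ↑ω) l} =
          {l : ℝ | IdealClusterPt densityZero x l}}) ∧
    (¬ IsMeagre {ω : Set.Ioc (0:ℝ) 1 |
        {l : ℝ | IdealClusterPt densityZero (subseq x ↑ω) l} =
          {l : ℝ | IdealClusterPt densityZero x l}} ↔
      limitPts x ⊆ {l : ℝ | IdealClusterPt densityZero x l}) :=
  statistical_cluster_main' x
end

section
/- Let x be a sequence of real numbers. Then the set of ω ∈ (0,1] such that the statistical limit points of the subsequence x↾ω equal the statistical limit points of x is comeager if and only if it is nonmeager, if and only if every ordinary limit point of x is a statistical limit point of x. -/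
open Filter Topology Set MeasureTheory
open scoped ENNReal

noncomputable section

namespace SLP

/-- digit is 0 or 1 -/
lemma digit_cases (ω : ℝ) (i : ℕ) : dyadicDigit ω i = 0 ∨ dyadicDigit ω i = 1 := by
  set y : ℝ := (2:ℝ) ^ i * ω with hy
  have h2y : (2:ℝ) ^ (i+1) * ω = 2 * y := by rw [hy]; ring
  have h1 : ⌈(2:ℝ) * y⌉ ≤ 2 * ⌈y⌉ := by
    apply Int.ceil_le.2
    push_cast
    nlinarith [Int.le_ceil y]
  have h2 : 2 * ⌈y⌉ - 1 ≤ ⌈(2:ℝ) * y⌉ := by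
    have : (2 * ⌈y⌉ - 2 : ℝ) < (2:ℝ) * y := by nlinarith [Int.ceil_lt_add_one y]
    have := lt_of_lt_of_le this (Int.le_ceil _)
    have : (2 * ⌈y⌉ - 2 : ℤ) < ⌈(2:ℝ) * y⌉ := by exact_mod_cast this
    omega
  unfold dyadicDigit
  rw [h2y, ← hy]
  omega

def dig (ω : ℝ) : ℕ → Prop := fun i => dyadicDigit ω i = 1

lemma dig_infinite (ω : ℝ) : {i | dig ω i}.Infinite := by
  by_contra hfin
  rw [Set.not_infinite] at hfin
  obtain ⟨N, hN⟩ : ∃ N, ∀ i, N ≤ i → ¬ dig ω i := by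
    rcases (hfin.bddAbove) with ⟨N, hNb⟩
    exact ⟨N + 1, fun i hi hdig => by
      have := hNb hdig; omega⟩
  -- all digits are 0 beyond N
  have h0 : ∀ i, N ≤ i → dyadicDigit ω i = 0 := fun i hi =>
    (digit_cases ω i).resolve_right (hN i hi)
  -- recurrence : ⌈2^(N+j) ω⌉ - 1 = 2^j (⌈2^N ω⌉ - 1)
  have hrec : ∀ j : ℕ, ⌈(2:ℝ) ^ (N + j) * ω⌉ - 1 = 2 ^ j * (⌈(2:ℝ) ^ N * ω⌉ - 1) := by
    intro j
    induction j with
    | zero => simp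
    | succ j ih =>
      have hd := h0 (N + j) (by omega)
      unfold dyadicDigit at hd
      have : (N + (j+1)) = (N + j) + 1 := by omega
      rw [this]
      have : ⌈(2:ℝ) ^ (N + j + 1) * ω⌉ = 2 * ⌈(2:ℝ) ^ (N + j) * ω⌉ - 1 := by omega
      rw [this]
      rw [pow_succ]
      ring_nf
      ring_nf at ih
      omega
  -- bounds
  have hlt : ((⌈(2:ℝ) ^ N * ω⌉ : ℝ) - 1) < (2:ℝ) ^ N * ω := by
    have := Int.ceil_lt_add_one ((2:ℝ) ^ N * ω); linarith
  set δ : ℝ := (2:ℝ) ^ N * ω - (⌈(2:ℝ) ^ N * ω⌉ - 1) with hδ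
  have hδpos : 0 < δ := by simp [hδ]; linarith
  obtain ⟨j, hj⟩ := exists_pow_lt_of_lt_one hδpos (by norm_num : (1/2 : ℝ) < 1)
  -- at step j : ⌈2^(N+j) ω⌉ ≥ 2^(N+j) ω
  have hge : ((2:ℝ) ^ (N + j) * ω) ≤ (⌈(2:ℝ) ^ (N + j) * ω⌉ : ℝ) := Int.le_ceil _
  have hrecj := hrec j
  have hrecR : ((⌈(2:ℝ) ^ (N + j) * ω⌉ : ℝ)) - 1 = 2 ^ j * ((⌈(2:ℝ) ^ N * ω⌉ : ℝ) - 1) := by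
    exact_mod_cast congrArg (Int.cast : ℤ → ℝ) hrecj
  have hpj : (0:ℝ) < 2 ^ j := by positivity
  have h2N : ((2:ℝ)) ^ (N + j) = 2 ^ N * 2 ^ j := by rw [pow_add]
  -- from hge : 2^j (c_N - 1) ≥ 2^N 2^j ω - 1
  have : ((⌈(2:ℝ) ^ N * ω⌉ : ℝ) - 1) ≥ (2:ℝ) ^ N * ω - (1/2) ^ j := by
    have h1 : (2:ℝ) ^ j * ((⌈(2:ℝ) ^ N * ω⌉ : ℝ) - 1) ≥ 2 ^ N * 2 ^ j * ω - 1 := by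
      rw [← hrecR, ← h2N]; linarith
    have h2 : ((1:ℝ)/2) ^ j = ((2:ℝ)^j)⁻¹ := by
      rw [div_pow]; simp
    have h3 : (2:ℝ) ^ j * ((1/2:ℝ) ^ j) = 1 := by rw [h2]; field_simp
    nlinarith [h1, h3, hpj]
  rw [hδ] at hj
  linarith

/-- Two points in the same `Ioc ((c-1)/2^s) (c/2^s)` have equal ceilings. -/
lemma ceil_eq_of_mem_Ioc {c : ℤ} {s : ℕ} {y z : ℝ}
    (hy : y ∈ Set.Ioc (((c:ℝ) - 1) / 2 ^ s) ((c:ℝ) / 2 ^ s))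
    (hz : z ∈ Set.Ioc (((c:ℝ) - 1) / 2 ^ s) ((c:ℝ) / 2 ^ s)) :
    ⌈y⌉ = ⌈z⌉ := by
  have hp : (0:ℝ) < 2 ^ s := by positivity
  have key : ∀ u v : ℝ, u ∈ Set.Ioc (((c:ℝ) - 1) / 2 ^ s) ((c:ℝ) / 2 ^ s) →
      v ∈ Set.Ioc (((c:ℝ) - 1) / 2 ^ s) ((c:ℝ) / 2 ^ s) → ⌈u⌉ ≤ ⌈v⌉ := by
    intro u v hu hv
    by_contra hlt
    push_neg at hlt
    have h1 : ((⌈v⌉ : ℝ)) < u := Int.lt_ceil.1 hlt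
    have h2 : ((c:ℝ) - 1) / 2 ^ s < (⌈v⌉ : ℝ) := lt_of_lt_of_le hv.1 (Int.le_ceil v)
    have h3 : (⌈v⌉ : ℝ) < (c:ℝ) / 2 ^ s := lt_of_lt_of_le h1 hu.2
    have h4 : ((c:ℝ) - 1) < (⌈v⌉ : ℝ) * 2 ^ s := by
      rw [div_lt_iff₀ hp] at h2; linarith
    have h5 : (⌈v⌉ : ℝ) * 2 ^ s < (c:ℝ) := by
      rw [lt_div_iff₀ hp] at h3; linarith
    have h4' : (c - 1 : ℤ) < ⌈v⌉ * 2 ^ s := by exact_mod_cast h4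
    have h5' : (⌈v⌉ * 2 ^ s : ℤ) < c := by exact_mod_cast h5
    omega
  exact le_antisymm (key y z hy hz) (key z y hz hy)

/-- If the level-`t` ceilings agree then all lower-level ceilings agree. -/
lemma ceq_mono {ω₁ ω₂ : ℝ} {t i : ℕ} (h : ⌈(2:ℝ) ^ t * ω₂⌉ = ⌈(2:ℝ) ^ t * ω₁⌉)
    (hi : i ≤ t) : ⌈(2:ℝ) ^ i * ω₂⌉ = ⌈(2:ℝ) ^ i * ω₁⌉ := by
  set c : ℤ := ⌈(2:ℝ) ^ t * ω₁⌉ with hc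
  have hmem : ∀ ω : ℝ, ⌈(2:ℝ) ^ t * ω⌉ = c →
      (2:ℝ) ^ i * ω ∈ Set.Ioc (((c:ℝ) - 1) / 2 ^ (t - i)) ((c:ℝ) / 2 ^ (t - i)) := by
    intro ω hω
    have h1 : ((c:ℝ)) - 1 < (2:ℝ) ^ t * ω ∧ (2:ℝ) ^ t * ω ≤ (c:ℝ) := by
      have := Int.ceil_eq_iff.1 hω  -- needs z - 1 < r ∧ r ≤ z form
      exact ⟨by exact_mod_cast this.1, this.2⟩
    have hp : (0:ℝ) < 2 ^ (t - i) := by positivity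
    have hsplit : (2:ℝ) ^ t = 2 ^ (t - i) * 2 ^ i := by
      rw [← pow_add]; congr 1; omega
    constructor
    · rw [div_lt_iff₀ hp]
      calc ((c:ℝ) - 1) < 2 ^ t * ω := h1.1
        _ = 2 ^ i * ω * 2 ^ (t - i) := by rw [hsplit]; ring
    · rw [le_div_iff₀ hp]
      calc (2:ℝ) ^ i * ω * 2 ^ (t - i) = 2 ^ t * ω := by rw [hsplit]; ring
        _ ≤ (c:ℝ) := h1.2
  exact ceil_eq_of_mem_Ioc (hmem ω₂ h) (hmem ω₁ rfl)

lemma digit_eq_of_ceq {ω₁ ω₂ : ℝ} {t i : ℕ} (h : ⌈(2:ℝ) ^ t * ω₂⌉ = ⌈(2:ℝ) ^ t * ω₁⌉)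
    (hi : i < t) : dyadicDigit ω₂ i = dyadicDigit ω₁ i := by
  unfold dyadicDigit
  rw [ceq_mono h (by omega : i + 1 ≤ t), ceq_mono h (by omega : i ≤ t)]

lemma dist_lt_of_ceq {ω₁ ω₂ : ℝ} {t : ℕ} (h : ⌈(2:ℝ) ^ t * ω₂⌉ = ⌈(2:ℝ) ^ t * ω₁⌉) :
    |ω₂ - ω₁| < (1/2) ^ t := by
  set c : ℤ := ⌈(2:ℝ) ^ t * ω₁⌉ with hc
  have hp : (0:ℝ) < 2 ^ t := by positivity
  have hb : ∀ ω : ℝ, ⌈(2:ℝ) ^ t * ω⌉ = c → ((c:ℝ) - 1) < 2 ^ t * ω ∧ 2 ^ t * ω ≤ (c:ℝ) := by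
    intro ω hω
    have := Int.ceil_eq_iff.1 hω
    exact ⟨by exact_mod_cast this.1, this.2⟩
  obtain ⟨h1, h2⟩ := hb ω₂ h
  obtain ⟨h3, h4⟩ := hb ω₁ rfl
  rw [abs_lt]
  constructor <;> [skip; skip] <;>
  · have hhalf : ((1:ℝ)/2) ^ t = ((2:ℝ) ^ t)⁻¹ := by rw [div_pow]; simp
    rw [hhalf]
    rw [show ∀ a b : ℝ, a < b ↔ 2 ^ t * a < 2 ^ t * b from fun a b => (mul_lt_mul_iff_right₀ hp).symm]
    have : (2:ℝ) ^ t * ((2:ℝ)^t)⁻¹ = 1 := by field_simp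
    nlinarith

lemma mem_Ioc_of_ceq {ω₁ ω₂ : ℝ} {t : ℕ} (hω₁ : ω₁ ∈ Set.Ioc (0:ℝ) 1)
    (h : ⌈(2:ℝ) ^ t * ω₂⌉ = ⌈(2:ℝ) ^ t * ω₁⌉) : ω₂ ∈ Set.Ioc (0:ℝ) 1 := by
  have h0 := ceq_mono h (Nat.zero_le t)
  simp only [pow_zero, one_mul] at h0
  have hc1 : ⌈ω₁⌉ = 1 := by
    have : (0:ℝ) < ω₁ := hω₁.1
    have h1 : (1:ℤ) ≤ ⌈ω₁⌉ := by exact_mod_cast Int.ceil_pos.2 this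
    have h2 : ⌈ω₁⌉ ≤ 1 := Int.ceil_le.2 (by exact_mod_cast hω₁.2)
    omega
  rw [hc1] at h0
  have := Int.ceil_eq_iff.1 h0
  constructor
  · have : ((1:ℤ):ℝ) - 1 < ω₂ := this.1
    simpa using this
  · have : ω₂ ≤ ((1:ℤ):ℝ) := this.2
    simpa using this

open Classical in
/-- One-step digit extension. -/
lemma exists_next (ω₁ : ℝ) (t : ℕ) (b : Prop) :
    ∃ ω₂ : ℝ, ⌈(2:ℝ) ^ t * ω₂⌉ = ⌈(2:ℝ) ^ t * ω₁⌉ ∧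
      dyadicDigit ω₂ t = if b then 1 else 0 := by
  set c : ℤ := ⌈(2:ℝ) ^ t * ω₁⌉ with hc
  have hp : (0:ℝ) < 2 ^ t := by positivity
  by_cases hb : b
  · refine ⟨(c:ℝ) / 2 ^ t, ?_, ?_⟩
    · have : (2:ℝ) ^ t * ((c:ℝ) / 2 ^ t) = (c:ℝ) := by field_simp
      rw [this, Int.ceil_intCast]
    · have e1 : (2:ℝ) ^ (t+1) * ((c:ℝ) / 2 ^ t) = ((2 * c : ℤ) : ℝ) := by
        push_cast; rw [pow_succ]; field_simp
      have e2 : (2:ℝ) ^ t * ((c:ℝ) / 2 ^ t) = (c:ℝ) := by field_simp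
      unfold dyadicDigit
      rw [e1, e2, Int.ceil_intCast, Int.ceil_intCast, if_pos hb]
      ring
  · refine ⟨(2 * (c:ℝ) - 1) / 2 ^ (t+1), ?_, ?_⟩
    · have e1 : (2:ℝ) ^ t * ((2 * (c:ℝ) - 1) / 2 ^ (t+1)) = (c:ℝ) - 1/2 := by
        rw [pow_succ]; field_simp
      rw [e1]
      have : ⌈(c:ℝ) - 1/2⌉ = c := by
        rw [Int.ceil_eq_iff] <;> constructor <;> norm_num
      rw [this]
    · have e1 : (2:ℝ) ^ (t+1) * ((2 * (c:ℝ) - 1) / 2 ^ (t+1)) = ((2 * c - 1 : ℤ) : ℝ) := by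
        push_cast; field_simp
      have e2 : (2:ℝ) ^ t * ((2 * (c:ℝ) - 1) / 2 ^ (t+1)) = (c:ℝ) - 1/2 := by
        rw [pow_succ]; field_simp
      unfold dyadicDigit
      rw [e1, e2, Int.ceil_intCast]
      have : ⌈(c:ℝ) - 1/2⌉ = c := by
        rw [Int.ceil_eq_iff] <;> constructor <;> norm_num
      rw [this, if_neg hb]
      ring

open Classical in
/-- Finite digit-pattern extension. -/
lemma exists_pattern (ω₀ : ℝ) (t : ℕ) (g : ℕ → Prop) (k : ℕ) :
    ∃ ω₁ : ℝ, ⌈(2:ℝ) ^ t * ω₁⌉ = ⌈(2:ℝ) ^ t * ω₀⌉ ∧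
      ∀ j, t ≤ j → j < t + k → dyadicDigit ω₁ j = if g j then 1 else 0 := by
  induction k with
  | zero => exact ⟨ω₀, rfl, fun j h1 h2 => by omega⟩
  | succ k ih =>
    obtain ⟨ω₁, hceq, hdig⟩ := ih
    obtain ⟨ω₂, hceq₂, hdig₂⟩ := exists_next ω₁ (t + k) (g (t + k))
    refine ⟨ω₂, ?_, ?_⟩
    · exact (ceq_mono hceq₂ (by omega)).trans hceq
    · intro j h1 h2
      rcases Nat.lt_or_ge j (t + k) with hj | hj
      · rw [digit_eq_of_ceq hceq₂ hj]
        exact hdig j h1 hj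
      · have : j = t + k := by omega
        rw [this]
        exact hdig₂

instance digDec (ω : ℝ) : DecidablePred (dig ω) := fun _ => Classical.propDecidable _

lemma mid_ceil (c : ℤ) (t : ℕ) : ⌈(2:ℝ) ^ t * ((2 * (c:ℝ) - 1) / 2 ^ (t+1))⌉ = c := by
  have e2 : (2:ℝ) ^ t * ((2 * (c:ℝ) - 1) / 2 ^ (t+1)) = (c:ℝ) - 1/2 := by
    rw [pow_succ]; field_simp
  rw [e2]
  rw [Int.ceil_eq_iff] <;> constructor <;> norm_num

lemma ceil_bounds {c : ℤ} {t : ℕ} {ω : ℝ} (h : ⌈(2:ℝ) ^ t * ω⌉ = c) :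
    ((c:ℝ) - 1) / 2 ^ t < ω ∧ ω ≤ (c:ℝ) / 2 ^ t := by
  have hp : (0:ℝ) < 2 ^ t := by positivity
  have h1 := Int.ceil_eq_iff.1 h
  constructor
  · rw [div_lt_iff₀ hp]
    have : ((c:ℝ)) - 1 < 2 ^ t * ω := by exact_mod_cast h1.1
    linarith
  · rw [le_div_iff₀ hp]
    have : (2:ℝ) ^ t * ω ≤ (c:ℝ) := h1.2
    linarith

lemma ceil_eq_of_bounds {c : ℤ} {t : ℕ} {ω : ℝ}
    (h1 : ((c:ℝ) - 1) / 2 ^ t < ω) (h2 : ω ≤ (c:ℝ) / 2 ^ t) : ⌈(2:ℝ) ^ t * ω⌉ = c := by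
  have hp : (0:ℝ) < 2 ^ t := by positivity
  rw [Int.ceil_eq_iff]
  constructor
  · push_cast
    rw [div_lt_iff₀ hp] at h1
    linarith
  · rw [le_div_iff₀ hp] at h2
    linarith

/-- count of a chain of `s+1` elements of `p` in `[a, b)`. -/
lemma count_ge_of_chain {p : ℕ → Prop} [DecidablePred p] {f : ℕ → ℕ} (hf : StrictMono f)
    {a b s : ℕ} (ha : a ≤ f 0) (hb : f s < b) (hp : ∀ j, j ≤ s → p (f j)) :
    Nat.count p a + s + 1 ≤ Nat.count p b := by
  have aux : ∀ s' : ℕ, (∀ j, j ≤ s' → p (f j)) →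
      Nat.count p a + s' + 1 ≤ Nat.count p (f s' + 1) := by
    intro s'
    induction s' with
    | zero =>
      intro hp'
      have h1 : Nat.count p (f 0 + 1) = Nat.count p (f 0) + 1 := by
        rw [Nat.count_succ, if_pos (hp' 0 le_rfl)]
      have h2 : Nat.count p a ≤ Nat.count p (f 0) := Nat.count_monotone _ ha
      omega
    | succ s' ih =>
      intro hp'
      have hstep : f s' < f (s'+1) := hf (by omega)
      have ih' := ih (fun j hj => hp' j (by omega))
      have h1 : Nat.count p (f (s'+1) + 1) = Nat.count p (f (s'+1)) + 1 := by
        rw [Nat.count_succ, if_pos (hp' (s'+1) le_rfl)]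
      have h2 : Nat.count p (f s' + 1) ≤ Nat.count p (f (s'+1)) := Nat.count_monotone _ (by omega)
      omega
  have h3 : Nat.count p (f s + 1) ≤ Nat.count p b := Nat.count_monotone _ (by omega)
  have := aux s hp
  omega

def Good (x : ℕ → ℝ) (q δ : ℚ) : Prop := {n | |x n - (q:ℝ)| < (δ:ℝ)}.Infinite

def Eset (x : ℕ → ℝ) (q δ : ℚ) (N : ℕ) : Set ℝ :=
  {ω | ∃ a b : ℕ, N ≤ a ∧ a ≤ b ∧ (∀ i, a ≤ i → i < b → dig ω i → |x i - (q:ℝ)| < (δ:ℝ)) ∧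
    2 * Nat.count (dig ω) a + 1 ≤ Nat.count (dig ω) b}

instance : LocallyCompactSpace ↥(Set.Ioc (0:ℝ) 1) := by
  have h : IsLocallyClosed (Set.Ioc (0:ℝ) 1) := by
    rw [← Set.Ioi_inter_Iic]
    exact isOpen_Ioi.isLocallyClosed.inter isClosed_Iic.isLocallyClosed
  exact h.locallyCompactSpace

lemma Eset_residual (x : ℕ → ℝ) (q δ : ℚ) (N : ℕ) (hG : Good x q δ) :
    (Subtype.val ⁻¹' Eset x q δ N : Set ↥(Set.Ioc (0:ℝ) 1)) ∈ residual _ := by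
  classical
  set O : Set ℝ := ⋃ (t : ℕ) (c : ℤ)
      (_ : ∀ ω : ℝ, ⌈(2:ℝ) ^ t * ω⌉ = c → ω ∈ Eset x q δ N),
      Set.Ioo (((c:ℝ) - 1) / 2 ^ t) ((c:ℝ) / 2 ^ t) with hO
  have hOsub : (Subtype.val ⁻¹' O : Set ↥(Set.Ioc (0:ℝ) 1)) ⊆ Subtype.val ⁻¹' Eset x q δ N := by
    rintro ω' hω'
    simp only [hO, Set.mem_preimage, Set.mem_iUnion] at hω' ⊢
    obtain ⟨t, c, hcond, hIoo⟩ := hω'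
    exact hcond _ (ceil_eq_of_bounds hIoo.1 hIoo.2.le)
  have hOopen : IsOpen (Subtype.val ⁻¹' O : Set ↥(Set.Ioc (0:ℝ) 1)) := by
    apply IsOpen.preimage continuous_subtype_val
    exact isOpen_iUnion fun t => isOpen_iUnion fun c => isOpen_iUnion fun _ => isOpen_Ioo
  have hdense : Dense (Subtype.val ⁻¹' O : Set ↥(Set.Ioc (0:ℝ) 1)) := by
    rw [Metric.dense_iff]
    rintro ⟨ω₀, hω₀⟩ ε hε
    obtain ⟨t₀, ht₀⟩ := exists_pow_lt_of_lt_one hε (by norm_num : (1/2 : ℝ) < 1)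
    set a : ℕ := max t₀ N with ha
    -- the set of candidate indices
    have hinf : {n : ℕ | a ≤ n ∧ |x n - (q:ℝ)| < (δ:ℝ)}.Infinite := by
      exact (hG.diff (Set.finite_Iio a)).mono (fun n hn => ⟨by simpa using hn.2, hn.1⟩)
    set e : ℕ → ℕ := Nat.nth (fun n => a ≤ n ∧ |x n - (q:ℝ)| < (δ:ℝ)) with he
    have hemem : ∀ j, a ≤ e j ∧ |x (e j) - (q:ℝ)| < (δ:ℝ) := fun j =>
      Nat.nth_mem_of_infinite hinf j
    have hemono : StrictMono e := Nat.nth_strictMono hinf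
    set b : ℕ := e (2 * a) + 1 with hb
    have hab : a ≤ b := le_trans (hemem (2*a)).1 (by omega)
    -- extend digits of ω₀
    obtain ⟨ω₁, hceq₁, hdig₁⟩ := exists_pattern ω₀ t₀
      (fun i => a ≤ i ∧ |x i - (q:ℝ)| < (δ:ℝ)) (b - t₀)
    have ht₀a : t₀ ≤ a := le_max_left _ _
    have ht₀b : t₀ ≤ b := le_trans ht₀a hab
    set c₁ : ℤ := ⌈(2:ℝ) ^ b * ω₁⌉ with hc₁
    -- every point of the dyadic interval at level b is in Eset
    have hEsub : ∀ ω : ℝ, ⌈(2:ℝ) ^ b * ω⌉ = c₁ → ω ∈ Eset x q δ N := by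
      intro ω hω
      have hdigeq : ∀ i, i < b → dyadicDigit ω i = dyadicDigit ω₁ i :=
        fun i hi => digit_eq_of_ceq hω hi
      refine ⟨a, b, le_max_right _ _, hab, ?_, ?_⟩
      · intro i h1 h2 hdigi
        have := hdigeq i h2
        rw [hdig₁ i (le_trans ht₀a h1) (by omega)] at this
        by_contra hcon
        rw [if_neg (fun hcon2 => hcon hcon2.2)] at this
        exact absurd (hdigi.symm.trans this).symm (by norm_num)
      · have hchain : Nat.count (dig ω) a + (2*a) + 1 ≤ Nat.count (dig ω) b := by
          apply count_ge_of_chain hemono (hemem 0).1 (by omega)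
          intro j hj
          have hj1 : a ≤ e j := (hemem j).1
          have hj2 : e j < b := by
            have : e j ≤ e (2*a) := hemono.monotone hj
            omega
          show dyadicDigit ω (e j) = 1
          rw [hdigeq _ hj2, hdig₁ _ (le_trans ht₀a hj1) (by omega), if_pos ⟨hj1, (hemem j).2⟩]
        have hca : Nat.count (dig ω) a ≤ a := Nat.count_le _
        omega
    -- midpoint of that interval
    set mid : ℝ := (2 * (c₁:ℝ) - 1) / 2 ^ (b+1) with hmid
    have hmidceq : ⌈(2:ℝ) ^ b * mid⌉ = c₁ := mid_ceil c₁ b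
    have hω₁Ioc : ω₁ ∈ Set.Ioc (0:ℝ) 1 := mem_Ioc_of_ceq hω₀ hceq₁
    have hmidIoc : mid ∈ Set.Ioc (0:ℝ) 1 := mem_Ioc_of_ceq hω₁Ioc hmidceq
    have hmidO : mid ∈ O := by
      simp only [hO, Set.mem_iUnion]
      refine ⟨b, c₁, hEsub, ?_, ?_⟩
      · have hp : (0:ℝ) < 2 ^ b := by positivity
        rw [div_lt_div_iff₀ hp (by positivity : (0:ℝ) < 2 ^ (b+1))]
        have he : ((c₁:ℝ) - 1) * 2 ^ (b+1) = (2*(c₁:ℝ) - 2) * 2 ^ b := by rw [pow_succ]; ring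
        rw [he]
        have : (2*(c₁:ℝ) - 2) < 2*(c₁:ℝ) - 1 := by linarith
        exact mul_lt_mul_of_pos_right this hp
      · have hp : (0:ℝ) < 2 ^ b := by positivity
        rw [div_lt_div_iff₀ (by positivity : (0:ℝ) < 2 ^ (b+1)) hp]
        have he : ((c₁:ℝ)) * 2 ^ (b+1) = (2*(c₁:ℝ)) * 2 ^ b := by rw [pow_succ]; ring
        rw [he]
        have : (2*(c₁:ℝ) - 1) < 2*(c₁:ℝ) := by linarith
        exact mul_lt_mul_of_pos_right this hp
    have hmiddist : |mid - ω₀| < ε := by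
      have h1 : ⌈(2:ℝ) ^ t₀ * mid⌉ = ⌈(2:ℝ) ^ t₀ * ω₁⌉ := ceq_mono hmidceq ht₀b
      have h2 : ⌈(2:ℝ) ^ t₀ * mid⌉ = ⌈(2:ℝ) ^ t₀ * ω₀⌉ := h1.trans hceq₁
      exact lt_trans (dist_lt_of_ceq h2) ht₀
    refine ⟨⟨mid, hmidIoc⟩, ?_⟩
    constructor
    · rw [Metric.mem_ball, Subtype.dist_eq, Real.dist_eq]
      exact hmiddist
    · exact hmidO
  rw [mem_residual]
  exact ⟨Subtype.val ⁻¹' O, hOsub, hOopen.isGδ, hdense⟩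

lemma limit_pt_freq {x : ℕ → ℝ} {l : ℝ} (hl : l ∈ limitPts x) {ε : ℝ} (hε : 0 < ε) :
    {n | |x n - l| < ε}.Infinite := by
  obtain ⟨k, hmono, hlim⟩ := hl
  have hev : ∀ᶠ j in atTop, |x (k j) - l| < ε := by
    have := Metric.tendsto_atTop.1 hlim ε hε
    obtain ⟨J, hJ⟩ := this
    exact Filter.eventually_atTop.2 ⟨J, fun j hj => by
      have := hJ j hj; rwa [Function.comp_apply, Real.dist_eq] at this⟩
  obtain ⟨J, hJ⟩ := Filter.eventually_atTop.1 hev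
  refine Set.infinite_of_injective_forall_mem
    (f := fun j : ℕ => k (J + j)) ?_ ?_
  · intro i j hij
    have := hmono.injective hij
    omega
  · intro j
    exact hJ (J + j) (by omega)

open Classical in
lemma generic_includes (x : ℕ → ℝ) (ω : ℝ)
    (hω : ∀ (q δ : ℚ) (N : ℕ), Good x q δ → ω ∈ Eset x q δ N) :
    limitPts x ⊆ {l : ℝ | IdealLimitPt densityZero (subseq x ω) l} := by
  intro l hl
  have hPinf : {i | dig ω i}.Infinite := dig_infinite ω
  -- stage radii
  set δm : ℕ → ℚ := fun m => 1 / (2 * (m:ℚ) + 2) with hδm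
  have hδpos : ∀ m, (0:ℝ) < ((δm m : ℚ) : ℝ) := by
    intro m
    have : (0:ℚ) < δm m := by positivity
    exact_mod_cast this
  -- stage rational centers
  have hq : ∀ m : ℕ, ∃ q : ℚ, |l - (q:ℝ)| < ((δm m : ℚ) : ℝ) := fun m =>
    exists_rat_near l (hδpos m)
  set qm : ℕ → ℚ := fun m => Classical.choose (hq m) with hqm
  have hqspec : ∀ m, |l - ((qm m : ℚ) : ℝ)| < ((δm m : ℚ) : ℝ) := fun m =>
    Classical.choose_spec (hq m)
  have hGood : ∀ m, Good x (qm m) (δm m) := by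
    intro m
    have hpos : (0:ℝ) < ((δm m : ℚ):ℝ) - |l - (qm m : ℝ)| := by
      have := hqspec m; linarith
    apply ((limit_pt_freq hl hpos).mono)
    intro n hn
    simp only [Set.mem_setOf_eq] at hn ⊢
    have h1 := hqspec m
    have : |x n - (qm m : ℝ)| ≤ |x n - l| + |l - (qm m : ℝ)| := abs_sub_le _ _ _
    linarith
  -- block chooser
  have step : ∀ (m N : ℕ), ∃ ab : ℕ × ℕ, N ≤ ab.1 ∧ ab.1 ≤ ab.2 ∧
      (∀ i, ab.1 ≤ i → i < ab.2 → dig ω i → |x i - (qm m : ℝ)| < ((δm m : ℚ):ℝ)) ∧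
      2 * Nat.count (dig ω) ab.1 + 1 ≤ Nat.count (dig ω) ab.2 := by
    intro m N
    obtain ⟨a, b, h1, h2, h3, h4⟩ := hω (qm m) (δm m) N (hGood m)
    exact ⟨(a, b), h1, h2, h3, h4⟩
  set F : ℕ → ℕ × ℕ := fun m => Nat.rec (Classical.choose (step 0 0))
    (fun m' ih => Classical.choose (step (m'+1) ih.2)) m with hF
  have hF0 : F 0 = Classical.choose (step 0 0) := rfl
  have hFs : ∀ m, F (m+1) = Classical.choose (step (m+1) (F m).2) := fun m => rfl
  set A : ℕ → ℕ := fun m => (F m).1 with hA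
  set B : ℕ → ℕ := fun m => (F m).2 with hB
  have hprops : ∀ m, A m ≤ B m ∧
      (∀ i, A m ≤ i → i < B m → dig ω i → |x i - (qm m : ℝ)| < ((δm m : ℚ):ℝ)) ∧
      2 * Nat.count (dig ω) (A m) + 1 ≤ Nat.count (dig ω) (B m) := by
    intro m
    cases m with
    | zero =>
      have h := Classical.choose_spec (step 0 0)
      exact ⟨h.2.1, h.2.2.1, h.2.2.2⟩
    | succ m' =>
      have h := Classical.choose_spec (step (m'+1) (F m').2)
      exact ⟨h.2.1, h.2.2.1, h.2.2.2⟩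
  have hBA : ∀ m, B m ≤ A (m+1) := by
    intro m
    have h := Classical.choose_spec (step (m+1) (F m).2)
    exact h.1
  set u : ℕ → ℕ := fun m => Nat.count (dig ω) (A m) with hu
  set v : ℕ → ℕ := fun m => Nat.count (dig ω) (B m) with hv
  have huv : ∀ m, 2 * u m + 1 ≤ v m := fun m => (hprops m).2.2
  have hvu : ∀ m, v m ≤ u (m+1) := fun m => Nat.count_monotone _ (hBA m)
  have hustrict : StrictMono u := by
    apply strictMono_nat_of_lt_succ
    intro m
    have := huv m; have := hvu m; omega
  have hvstrict : StrictMono v := by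
    apply strictMono_nat_of_lt_succ
    intro m
    have := huv (m+1); have := hvu m; omega
  have humono : Monotone u := hustrict.monotone
  -- the index set
  set K : ℕ → Prop := fun k => ∃ m, u m ≤ k ∧ k < v m with hK
  have hKinf : {k | K k}.Infinite := by
    exact Set.infinite_of_injective_forall_mem (f := u) hustrict.injective
      (fun m => ⟨m, le_rfl, by have := huv m; omega⟩)
  -- value bound on blocks
  have hval : ∀ m k, u m ≤ k → k < v m → |subseq x ω k - l| < 3 * ((δm m : ℚ):ℝ) := by
    intro m k h1 h2
    set i : ℕ := Nat.nth (dig ω) k with hi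
    have hAi : A m ≤ i := (Nat.count_le_iff_le_nth hPinf).1 h1
    have hiB : i < B m := (Nat.lt_nth_iff_count_lt hPinf).1 h2
    have hdigi : dig ω i := Nat.nth_mem_of_infinite hPinf k
    have hxi : |x i - (qm m : ℝ)| < ((δm m : ℚ):ℝ) := (hprops m).2.1 i hAi hiB hdigi
    have hsub : subseq x ω k = x i := rfl
    rw [hsub]
    have h4 := hqspec m
    have : |x i - l| ≤ |x i - (qm m : ℝ)| + |(qm m : ℝ) - l| := abs_sub_le _ _ _
    rw [abs_sub_comm] at h4
    linarith [hδpos m]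
  -- convergence along K
  have htend : Tendsto (subseq x ω ∘ Nat.nth K) atTop (𝓝 l) := by
    rw [Metric.tendsto_atTop]
    intro ε hε
    -- pick m₀ with 3*δm m₀ < ε
    obtain ⟨m₀, hm₀⟩ : ∃ m₀ : ℕ, 3 * ((δm m₀ : ℚ):ℝ) < ε := by
      obtain ⟨n, hn⟩ := exists_nat_gt (3 / ε)
      refine ⟨n, ?_⟩
      have hcast : ((δm n : ℚ):ℝ) = 1 / (2 * (n:ℝ) + 2) := by
        rw [hδm]; push_cast; norm_num
      rw [hcast, mul_one_div, div_lt_iff₀ (by positivity : (0:ℝ) < 2 * (n:ℝ) + 2)]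
      have hn' : (3:ℝ) < (n:ℝ) * ε := by
        rw [div_lt_iff₀ hε] at hn
        linarith
      nlinarith [hε]
    refine ⟨u m₀, fun j hj => ?_⟩
    have hknk : K (Nat.nth K j) := Nat.nth_mem_of_infinite hKinf j
    obtain ⟨m, hm1, hm2⟩ := hknk
    have hjle : j ≤ Nat.nth K j := (Nat.nth_strictMono hKinf).le_apply
    have hmm₀ : m₀ ≤ m := by
      by_contra hcon
      push_neg at hcon
      have h7 : u (m+1) ≤ u m₀ := humono (Nat.succ_le_of_lt hcon)
      have h5 : v m ≤ u m₀ := le_trans (hvu m) h7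
      have h6 : u m₀ ≤ Nat.nth K j := le_trans hj hjle
      have h7 : Nat.nth K j < u m₀ := lt_of_lt_of_le hm2 h5
      exact absurd (lt_of_le_of_lt h6 h7) (lt_irrefl _)
    have hδle : ((δm m : ℚ):ℝ) ≤ ((δm m₀ : ℚ):ℝ) := by
      have : (δm m : ℚ) ≤ (δm m₀ : ℚ) := by
        rw [hδm]
        apply one_div_le_one_div_of_le
        · positivity
        · push_cast; norm_num; exact_mod_cast hmm₀
      exact_mod_cast this
    have := hval m _ hm1 hm2
    rw [Function.comp_apply, Real.dist_eq]
    linarith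
  -- K has positive upper density
  have hKdens : Set.range (Nat.nth K) ∉ densityZero := by
    rw [Nat.range_nth_of_infinite hKinf]
    intro hcon
    have hev := Filter.Tendsto.eventually_lt_const (by norm_num : (0:ℝ) < 1/2) hcon
    obtain ⟨n₀, hn₀⟩ := Filter.eventually_atTop.1 hev
    have hvn₀ : n₀ ≤ v n₀ := hvstrict.le_apply
    have hfin := hn₀ (v n₀) hvn₀
    set S : ℝ := ∑ i ∈ Finset.range (v n₀), if i ∈ {k | K k} then (1:ℝ) else 0 with hS
    have hsub : Finset.Ico (u n₀) (v n₀) ⊆ Finset.range (v n₀) := by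
      intro i hi
      rw [Finset.mem_Ico] at hi
      rw [Finset.mem_range]
      omega
    have hlow : ((v n₀ - u n₀ : ℕ) : ℝ) ≤ S := by
      have h1 : ∑ i ∈ Finset.Ico (u n₀) (v n₀), (if i ∈ {k | K k} then (1:ℝ) else 0)
          = ∑ i ∈ Finset.Ico (u n₀) (v n₀), (1:ℝ) := by
        apply Finset.sum_congr rfl
        intro i hi
        rw [Finset.mem_Ico] at hi
        exact if_pos ⟨n₀, hi.1, hi.2⟩
      have h2 : ∑ i ∈ Finset.Ico (u n₀) (v n₀), (1:ℝ) = ((v n₀ - u n₀ : ℕ) : ℝ) := by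
        rw [Finset.sum_const, Nat.card_Ico]
        simp
      have h3 : ∑ i ∈ Finset.Ico (u n₀) (v n₀), (if i ∈ {k | K k} then (1:ℝ) else 0) ≤ S := by
        rw [hS]
        apply Finset.sum_le_sum_of_subset_of_nonneg hsub
        intro i _ _
        split <;> norm_num
      rw [h1, h2] at h3
      exact h3
    have h2uv : 2 * u n₀ + 1 ≤ v n₀ := huv n₀
    have huvle : u n₀ ≤ v n₀ := by omega
    have hvpos : (0:ℝ) < (v n₀ : ℝ) := by
      have : 1 ≤ v n₀ := by omega
      exact_mod_cast Nat.lt_of_lt_of_le Nat.zero_lt_one this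
    rw [div_lt_iff₀ hvpos] at hfin
    have hcast : ((v n₀ - u n₀ : ℕ) : ℝ) = (v n₀ : ℝ) - (u n₀ : ℝ) := by
      push_cast [Nat.cast_sub huvle]
      ring
    have h2uvR : 2 * (u n₀ : ℝ) + 1 ≤ (v n₀ : ℝ) := by exact_mod_cast h2uv
    rw [hcast] at hlow
    linarith
  exact ⟨Nat.nth K, Nat.nth_strictMono hKinf, htend, hKdens⟩

lemma ideal_sub (I : Set (Set ℕ)) (z : ℕ → ℝ) :
    {l : ℝ | IdealLimitPt I z l} ⊆ limitPts z := by
  rintro l ⟨k, h1, h2, _⟩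
  exact ⟨k, h1, h2⟩

lemma limitPts_subseq (x : ℕ → ℝ) (ω : ℝ) : limitPts (subseq x ω) ⊆ limitPts x := by
  rintro l ⟨k, hk, hlim⟩
  refine ⟨Nat.nth (fun i => dyadicDigit ω i = 1) ∘ k, ?_, ?_⟩
  · exact (Nat.nth_strictMono (dig_infinite ω)).comp hk
  · exact hlim

instance : Nonempty ↥(Set.Ioc (0:ℝ) 1) := ⟨⟨1, by constructor <;> norm_num⟩⟩

lemma residual_nonmeager {S : Set ↥(Set.Ioc (0:ℝ) 1)} (hS : S ∈ residual _) :
    ¬ IsMeagre S := by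
  intro hM
  rw [IsMeagre] at hM
  have hempty : (∅ : Set ↥(Set.Ioc (0:ℝ) 1)) ∈ residual _ := by
    have := Filter.inter_mem hS hM
    rwa [Set.inter_compl_self] at this
  have := (dense_of_mem_residual hempty).nonempty
  simp at this

lemma key_residual (x : ℕ → ℝ) :
    {ω' : ↥(Set.Ioc (0:ℝ) 1) |
      {l : ℝ | IdealLimitPt densityZero (subseq x ↑ω') l} = limitPts x} ∈ residual _ := by
  have hT : (⋂ (q : ℚ) (δ : ℚ) (N : ℕ),
      {ω' : ↥(Set.Ioc (0:ℝ) 1) | Good x q δ → (ω' : ℝ) ∈ Eset x q δ N}) ∈ residual _ := by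
    rw [countable_iInter_mem]
    intro q
    rw [countable_iInter_mem]
    intro δ
    rw [countable_iInter_mem]
    intro N
    by_cases hg : Good x q δ
    · apply Filter.mem_of_superset (Eset_residual x q δ N hg)
      intro ω' h _
      exact h
    · exact Filter.univ_mem' (fun ω' h => absurd h hg)
  apply Filter.mem_of_superset hT
  intro ω' hω'
  simp only [Set.mem_iInter, Set.mem_setOf_eq] at hω'
  have hsubΛ : ∀ q δ N, Good x q δ → (ω' : ℝ) ∈ Eset x q δ N := fun q δ N hg => hω' q δ N hg
  apply Set.Subset.antisymm
  · exact (ideal_sub densityZero (subseq x ↑ω')).trans (limitPts_subseq x ↑ω')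
  · exact generic_includes x ↑ω' hsubΛ

end SLP

theorem statistical_limit_main_aux (x : ℕ → ℝ) :
    (IsMeagre {ω : Set.Ioc (0:ℝ) 1 |
        {l : ℝ | IdealLimitPt densityZero (subseq x ↑ω) l} ≠
          {l : ℝ | IdealLimitPt densityZero x l}} ↔
      ¬ IsMeagre {ω : Set.Ioc (0:ℝ) 1 |
        {l : ℝ | IdealLimitPt densityZero (subseq x ↑ω) l} =
          {l : ℝ | IdealLimitPt densityZero x l}}) ∧
    (¬ IsMeagre {ω : Set.Ioc (0:ℝ) 1 |
        {l : ℝ | IdealLimitPt densityZero (subseq x ↑ω) l} =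
          {l : ℝ | IdealLimitPt densityZero x l}} ↔
      limitPts x ⊆ {l : ℝ | IdealLimitPt densityZero x l}) := by
  set Λx : Set ℝ := {l : ℝ | IdealLimitPt densityZero x l} with hΛx
  set Seq : Set ↥(Set.Ioc (0:ℝ) 1) :=
    {ω : Set.Ioc (0:ℝ) 1 | {l : ℝ | IdealLimitPt densityZero (subseq x ↑ω) l} = Λx} with hSeq
  have hcompl : {ω : Set.Ioc (0:ℝ) 1 |
      {l : ℝ | IdealLimitPt densityZero (subseq x ↑ω) l} ≠ Λx} = Seqᶜ := by
    ext ω'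
    simp [hSeq]
  have hGG := SLP.key_residual x
  by_cases hcase : limitPts x ⊆ Λx
  · have hΛL : Λx = limitPts x :=
      Set.Subset.antisymm (SLP.ideal_sub densityZero x) hcase
    have hSsup : {ω' : ↥(Set.Ioc (0:ℝ) 1) |
        {l : ℝ | IdealLimitPt densityZero (subseq x ↑ω') l} = limitPts x} ⊆ Seq := by
      intro ω' h
      rw [hSeq]
      simp only [Set.mem_setOf_eq] at h ⊢
      rw [h, hΛL]
    have hSeqres : Seq ∈ residual _ := Filter.mem_of_superset hGG hSsup
    have hnm : ¬ IsMeagre Seq := SLP.residual_nonmeager hSeqres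
    have hm : IsMeagre Seqᶜ := by
      rw [IsMeagre, compl_compl]
      exact hSeqres
    rw [hcompl]
    exact ⟨iff_of_true hm hnm, iff_of_true hnm hcase⟩
  · obtain ⟨l, hlL, hlΛ⟩ := Set.not_subset.1 hcase
    have hSsup : {ω' : ↥(Set.Ioc (0:ℝ) 1) |
        {l : ℝ | IdealLimitPt densityZero (subseq x ↑ω') l} = limitPts x} ⊆ Seqᶜ := by
      intro ω' h
      simp only [Set.mem_setOf_eq] at h
      simp only [hSeq, Set.mem_compl_iff, Set.mem_setOf_eq]
      rw [h]
      intro hcon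
      rw [← hcon] at hlΛ
      exact hlΛ hlL
    have hScres : Seqᶜ ∈ residual _ := Filter.mem_of_superset hGG hSsup
    have hnmc : ¬ IsMeagre Seqᶜ := SLP.residual_nonmeager hScres
    have hmeq : IsMeagre Seq := by
      rw [IsMeagre]
      exact hScres
    rw [hcompl]
    exact ⟨iff_of_false hnmc (not_not_intro hmeq), iff_of_false (not_not_intro hmeq) hcase⟩


end

/-- For a real sequence `x`, the set of `ω` preserving the statistical limit
points is comeager iff it is nonmeager, iff every ordinary limit point of `x`
is a statistical limit point of `x`. -/
theorem statistical_limit_main (x : ℕ → ℝ) :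
    (IsMeagre {ω : Set.Ioc (0:ℝ) 1 |
        {l : ℝ | IdealLimitPt densityZero (subseq x ↑ω) l} ≠
          {l : ℝ | IdealLimitPt densityZero x l}} ↔
      ¬ IsMeagre {ω : Set.Ioc (0:ℝ) 1 |
        {l : ℝ | IdealLimitPt densityZero (subseq x ↑ω) l} =
          {l : ℝ | IdealLimitPt densityZero x l}}) ∧
    (¬ IsMeagre {ω : Set.Ioc (0:ℝ) 1 |
        {l : ℝ | IdealLimitPt densityZero (subseq x ↑ω) l} =
          {l : ℝ | IdealLimitPt densityZero x l}} ↔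
      limitPts x ⊆ {l : ℝ | IdealLimitPt densityZero x l}) :=
  statistical_limit_main_aux x
end

section
/- The set of normal numbers Ω = {ω ∈ (0,1] : (1/n) ∑_{i≤n} d_i(ω) → 1/2}, where ∑ d_i(ω)2^{-i} is the non-terminating dyadic expansion of ω, is a meager subset of (0,1] of full Lebesgue measure. -/
open Filter Topology Set MeasureTheory
open scoped ENNReal

noncomputable section NormalProof
namespace NN

lemma two_pow_split (n : ℕ) (h : 1 ≤ n) : 2^n = 2^(n-1) * 2 := by
  rw [← pow_succ]; congr 1; omega

/-- counting: number of k < 2^n with bit t equal to a. -/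
lemma count1 : ∀ t n a : ℕ, a < 2 → t < n →
    ((Finset.range (2^n)).filter (fun k => k / 2^t % 2 = a)).card = 2^(n-1) := by
  intro t
  induction t with
  | zero =>
    intro n a ha hn
    have h2 : 2^n = 2^(n-1) * 2 := two_pow_split n (by omega)
    rw [show ((Finset.range (2^n)).filter (fun k => k / 2^0 % 2 = a)).card
        = (Finset.range (2^(n-1))).card from ?_, Finset.card_range]
    apply Finset.card_nbij' (fun k => k / 2) (fun q => 2 * q + a)
    · intro x hx
      simp only [Finset.mem_coe, Finset.mem_filter, Finset.mem_range, pow_zero, Nat.div_one] at hx ⊢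
      omega
    · intro q hq
      simp only [Finset.mem_coe, Finset.mem_filter, Finset.mem_range, pow_zero, Nat.div_one] at hq ⊢
      omega
    · intro x hx
      simp only [Finset.mem_coe, Finset.mem_filter, Finset.mem_range, pow_zero, Nat.div_one] at hx ⊢
      omega
    · intro q hq
      simp only [Finset.mem_coe, Finset.mem_range] at hq ⊢
      omega
  | succ t ih =>
    intro n a ha hn
    have h2 : 2^n = 2^(n-1) * 2 := two_pow_split n (by omega)
    have h3 : 2^(n-1) = 2^(n-2) * 2 := two_pow_split (n-1) (by omega)
    have key : ((Finset.range (2^n)).filter (fun k => k / 2^(t+1) % 2 = a)).card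
        = ((Finset.range 2) ×ˢ ((Finset.range (2^(n-1))).filter (fun k => k / 2^t % 2 = a))).card := by
      apply Finset.card_nbij' (fun k => (k % 2, k / 2)) (fun p => 2 * p.2 + p.1)
      · intro x hx
        simp only [Finset.mem_coe, Finset.mem_filter, Finset.mem_range] at hx ⊢
        have hd : x / 2^(t+1) = (x / 2) / 2^t := by
          rw [Nat.div_div_eq_div_mul, ← pow_succ']
        refine Finset.mem_product.mpr ⟨Finset.mem_range.mpr (by omega),
          Finset.mem_filter.mpr ⟨Finset.mem_range.mpr (by omega), ?_⟩⟩
        show x / 2 / 2^t % 2 = a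
        rw [← hd]; exact hx.2
      · rintro ⟨c, q⟩ hp
        simp only [Finset.mem_coe, Finset.mem_product, Finset.mem_filter, Finset.mem_range] at hp
        obtain ⟨hc, hq, hqa⟩ := hp
        simp only [Finset.mem_coe, Finset.mem_filter, Finset.mem_range]
        have hd : (2 * q + c) / 2^(t+1) = ((2 * q + c) / 2) / 2^t := by
          rw [Nat.div_div_eq_div_mul, ← pow_succ']
        have he : (2 * q + c) / 2 = q := by omega
        exact ⟨by omega, by rw [hd, he]; exact hqa⟩
      · intro x hx; simp only [Finset.mem_coe, Finset.mem_filter, Finset.mem_range] at hx ⊢; omega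
      · rintro ⟨c, q⟩ hp
        simp only [Finset.mem_coe, Finset.mem_product, Finset.mem_filter, Finset.mem_range] at hp
        have : (2 * q + c) % 2 = c := by omega
        have h2q : (2 * q + c) / 2 = q := by omega
        simp only [this, h2q]
    rw [key, Finset.card_product, Finset.card_range, ih (n-1) a ha (by omega)]
    have h4 : n - 1 - 1 = n - 2 := by omega
    rw [h4]; omega

/-- counting pairs of bits. -/
lemma count2 (s j a b : ℕ) (hs1 : 1 ≤ s) (hsj : s ≤ j) (ha : a < 2) (hb : b < 2) :
    ((Finset.range (2^(j+1))).filter (fun k => k / 2^s % 2 = a ∧ k % 2 = b)).card = 2^(j-1) := by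
  have key : ((Finset.range (2^(j+1))).filter (fun k => k / 2^s % 2 = a ∧ k % 2 = b)).card
      = ((Finset.range (2^j)).filter (fun k => k / 2^(s-1) % 2 = a)).card := by
    have h2 : 2^(j+1) = 2^j * 2 := two_pow_split (j+1) (by omega)
    have hs : 2^s = 2^(s-1) * 2 := two_pow_split s hs1
    apply Finset.card_nbij' (fun k => k / 2) (fun q => 2 * q + b)
    · intro x hx
      simp only [Finset.mem_coe, Finset.mem_filter, Finset.mem_range] at hx ⊢
      have hd : x / 2^s = (x / 2) / 2^(s-1) := by
        rw [Nat.div_div_eq_div_mul, mul_comm 2 (2^(s-1)), ← hs]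
      refine ⟨by omega, by rw [← hd]; exact hx.2.1⟩
    · intro q hq
      simp only [Finset.mem_coe, Finset.mem_filter, Finset.mem_range] at hq ⊢
      have hd : (2 * q + b) / 2^s = ((2 * q + b) / 2) / 2^(s-1) := by
        rw [Nat.div_div_eq_div_mul, mul_comm 2 (2^(s-1)), ← hs]
      have he : (2 * q + b) / 2 = q := by omega
      refine ⟨by omega, by rw [hd, he]; exact hq.2, by omega⟩
    · intro x hx
      simp only [Finset.mem_coe, Finset.mem_filter, Finset.mem_range] at hx ⊢
      omega
    · intro q hq; simp only [Finset.mem_coe, Finset.mem_filter, Finset.mem_range] at hq ⊢; omega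
  rw [key, count1 (s-1) j a ha (by omega)]

/-- The ceiling formula on a dyadic interval. -/
lemma ceil_aux {n i k : ℕ} (hin : i ≤ n) {ω : ℝ} (h1 : (k:ℝ)/2^n < ω)
    (h2 : ω ≤ ((k:ℝ)+1)/2^n) :
    ⌈(2:ℝ)^i * ω⌉ = (k / 2^(n-i) : ℕ) + 1 := by
  have h2n : (0:ℝ) < 2^(n-i) := by positivity
  have h2i : (0:ℝ) < 2^i := by positivity
  have hsplit : (2:ℝ)^n = 2^i * 2^(n-i) := by
    rw [← pow_add]; congr 1; omega
  have hq : ((k / 2^(n-i) : ℕ) : ℝ) ≤ (k:ℝ) / 2^(n-i) := by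
    calc ((k / 2^(n-i) : ℕ) : ℝ) ≤ (k:ℝ) / ((2^(n-i) : ℕ) : ℝ) := Nat.cast_div_le
    _ = (k:ℝ) / 2^(n-i) := by push_cast; ring_nf
  have hub : (k:ℝ) + 1 ≤ (((k / 2^(n-i) : ℕ) : ℝ) + 1) * 2^(n-i) := by
    have h := Nat.div_add_mod k (2^(n-i))
    have hlt : k % 2^(n-i) < 2^(n-i) := Nat.mod_lt _ (by positivity)
    have : (k:ℕ) + 1 ≤ (k / 2^(n-i) + 1) * 2^(n-i) := by
      nlinarith [Nat.div_add_mod k (2^(n-i))]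
    calc (k:ℝ) + 1 ≤ (((k / 2^(n-i) + 1) * 2^(n-i) : ℕ) : ℝ) := by exact_mod_cast this
    _ = (((k / 2^(n-i) : ℕ) : ℝ) + 1) * 2^(n-i) := by push_cast; ring
  have hcast : ((((k / 2^(n-i) : ℕ) : ℤ) + 1 : ℤ) : ℝ) = ((k / 2^(n-i) : ℕ) : ℝ) + 1 := by
    rw [Int.cast_add, Int.cast_one, Int.cast_natCast]
  have hlow : ((k / 2^(n-i) : ℕ) : ℝ) < 2^i * ω := by
    calc ((k / 2^(n-i) : ℕ) : ℝ) ≤ (k:ℝ) / 2^(n-i) := hq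
    _ = 2^i * ((k:ℝ)/2^n) := by rw [hsplit]; field_simp
    _ < 2^i * ω := by exact (mul_lt_mul_iff_right₀ h2i).mpr h1
  rw [Int.ceil_eq_iff]
  constructor
  · rw [hcast]; linarith
  · rw [hcast]
    calc (2:ℝ)^i * ω ≤ 2^i * (((k:ℝ)+1)/2^n) := by exact (mul_le_mul_iff_right₀ h2i).mpr h2
    _ = ((k:ℝ)+1) / 2^(n-i) := by rw [hsplit]; field_simp
    _ ≤ ((k / 2^(n-i) : ℕ) : ℝ) + 1 := by
        rw [div_le_iff₀ h2n]; linarith [hub]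

/-- The digit formula on a dyadic interval. -/
lemma digit_eq {n i k : ℕ} (hi : i < n) {ω : ℝ} (h1 : (k:ℝ)/2^n < ω)
    (h2 : ω ≤ ((k:ℝ)+1)/2^n) :
    dyadicDigit ω i = ((k / 2^(n-1-i)) % 2 : ℕ) := by
  have e1 : ⌈(2:ℝ)^(i+1) * ω⌉ = (k / 2^(n-(i+1)) : ℕ) + 1 := ceil_aux (by omega) h1 h2
  have e2 : ⌈(2:ℝ)^i * ω⌉ = (k / 2^(n-i) : ℕ) + 1 := ceil_aux (by omega) h1 h2
  have hd : k / 2^(n-i) = (k / 2^(n-1-i)) / 2 := by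
    rw [Nat.div_div_eq_div_mul, ← pow_succ]; congr 2; omega
  have hd2 : n - (i+1) = n - 1 - i := by omega
  rw [dyadicDigit, e1, e2, hd2, hd]
  omega

/-- Existence of the dyadic interval containing ω. -/
lemma mem_partition (n : ℕ) {ω : ℝ} (hω : ω ∈ Set.Ioc (0:ℝ) 1) :
    ∃ k : ℕ, k < 2^n ∧ (k:ℝ)/2^n < ω ∧ ω ≤ ((k:ℝ)+1)/2^n := by
  obtain ⟨hω1, hω2⟩ := hω
  have h2n : (0:ℝ) < 2^n := by positivity
  have hpos : (0:ℤ) < ⌈(2:ℝ)^n * ω⌉ := by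
    rw [Int.lt_ceil]; push_cast; positivity
  have hle : ⌈(2:ℝ)^n * ω⌉ ≤ (2^n : ℕ) := by
    rw [Int.ceil_le]; push_cast
    nlinarith
  refine ⟨(⌈(2:ℝ)^n * ω⌉ - 1).toNat, ?_, ?_, ?_⟩
  · omega
  · rw [div_lt_iff₀ h2n]
    have : ((⌈(2:ℝ)^n * ω⌉ - 1).toNat : ℝ) = (⌈(2:ℝ)^n * ω⌉ : ℝ) - 1 := by
      have : ((⌈(2:ℝ)^n * ω⌉ - 1).toNat : ℤ) = ⌈(2:ℝ)^n * ω⌉ - 1 := by omega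
      exact_mod_cast congrArg (Int.cast : ℤ → ℝ) this
    rw [this]
    have := Int.ceil_lt_add_one ((2:ℝ)^n * ω)
    linarith [this, (by linarith [mul_pos h2n hω1] : (0:ℝ) < 2^n * ω), mul_comm ((2:ℝ)^n) ω]
  · rw [le_div_iff₀ h2n]
    have hc : ((⌈(2:ℝ)^n * ω⌉ - 1).toNat : ℝ) + 1 = (⌈(2:ℝ)^n * ω⌉ : ℝ) := by
      have : ((⌈(2:ℝ)^n * ω⌉ - 1).toNat : ℤ) + 1 = ⌈(2:ℝ)^n * ω⌉ := by omega
      exact_mod_cast congrArg (Int.cast : ℤ → ℝ) this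
    rw [hc]
    calc ω * 2^n = 2^n * ω := by ring
    _ ≤ _ := Int.le_ceil _

/-- Digits are 0 or 1 on (0,1]. -/
lemma digit_mem {ω : ℝ} (hω : ω ∈ Set.Ioc (0:ℝ) 1) (i : ℕ) :
    dyadicDigit ω i = 0 ∨ dyadicDigit ω i = 1 := by
  obtain ⟨k, hk, h1, h2⟩ := mem_partition (i+1) hω
  have := digit_eq (by omega : i < i + 1) h1 h2
  rw [this]
  omega

end NN

namespace NN

/-- The digit cylinder sets. -/
def D (i : ℕ) (a : ℤ) : Set ℝ := {ω : ℝ | ω ∈ Set.Ioc (0:ℝ) 1 ∧ dyadicDigit ω i = a}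

lemma measurable_digit (i : ℕ) : Measurable (fun ω : ℝ => dyadicDigit ω i) := by
  unfold dyadicDigit
  apply Measurable.add
  · apply Measurable.sub
    · exact Int.measurable_ceil.comp (measurable_const.mul measurable_id)
    · exact measurable_const.mul (Int.measurable_ceil.comp (measurable_const.mul measurable_id))
  · exact measurable_const

lemma measurable_X (i : ℕ) : Measurable (fun ω : ℝ => (dyadicDigit ω i : ℝ)) :=
  (measurable_from_top (f := (Int.cast : ℤ → ℝ))).comp (measurable_digit i)

lemma measurableSet_D (i : ℕ) (a : ℤ) : MeasurableSet (D i a) :=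
  measurableSet_Ioc.inter ((measurable_digit i) (measurableSet_singleton a))

lemma D_subset (i : ℕ) (a : ℤ) : D i a ⊆ Set.Ioc (0:ℝ) 1 := fun _ h => h.1

lemma D_union (i : ℕ) : D i 1 ∪ D i 0 = Set.Ioc (0:ℝ) 1 := by
  ext ω
  constructor
  · rintro (h | h) <;> exact h.1
  · intro h
    rcases digit_mem h i with h0 | h1
    · exact Or.inr ⟨h, h0⟩
    · exact Or.inl ⟨h, h1⟩

lemma Ioc_subset_unit {n k : ℕ} (hk : k < 2^n) :
    Set.Ioc ((k:ℝ)/2^n) (((k:ℝ)+1)/2^n) ⊆ Set.Ioc (0:ℝ) 1 := by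
  intro ω hω
  have h2n : (0:ℝ) < 2^n := by positivity
  have hk' : (k:ℝ) + 1 ≤ 2^n := by
    have : (k:ℕ) + 1 ≤ 2^n := hk
    exact_mod_cast this
  constructor
  · have : (0:ℝ) ≤ (k:ℝ)/2^n := by positivity
    linarith [hω.1]
  · have : ((k:ℝ)+1)/2^n ≤ 1 := by
      rw [div_le_one h2n]; exact hk'
    linarith [hω.2]

/-- Master lemma: measure of a set determined by a condition on level-n dyadic intervals. -/
lemma vol_cylinder (n : ℕ) (p : ℕ → Prop) [DecidablePred p] (C : Set ℝ)
    (hC : C ⊆ Set.Ioc (0:ℝ) 1)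
    (hiff : ∀ k : ℕ, k < 2^n → ∀ ω : ℝ, (k:ℝ)/2^n < ω → ω ≤ ((k:ℝ)+1)/2^n → (ω ∈ C ↔ p k)) :
    volume C = ((Finset.range (2^n)).filter p).card * ((2:ℝ≥0∞)^n)⁻¹ := by
  have h2n : (0:ℝ) < 2^n := by positivity
  have hCeq : C = ⋃ k ∈ (Finset.range (2^n)).filter p,
      Set.Ioc ((k:ℝ)/2^n) (((k:ℝ)+1)/2^n) := by
    ext ω
    simp only [Set.mem_iUnion, Finset.mem_filter, Finset.mem_range, exists_prop]
    constructor
    · intro hω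
      obtain ⟨k, hk, h1, h2⟩ := mem_partition n (hC hω)
      exact ⟨k, ⟨hk, (hiff k hk ω h1 h2).mp hω⟩, h1, h2⟩
    · rintro ⟨k, ⟨hk, hpk⟩, h1, h2⟩
      exact (hiff k hk ω h1 h2).mpr hpk
  rw [hCeq, measure_biUnion_finset ?disj (fun k _ => measurableSet_Ioc)]
  · have hval : ∀ k ∈ (Finset.range (2^n)).filter p,
        volume (Set.Ioc ((k:ℝ)/2^n) (((k:ℝ)+1)/2^n)) = ((2:ℝ≥0∞)^n)⁻¹ := by
      intro k _
      rw [Real.volume_Ioc]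
      have h : ((k:ℝ)+1)/2^n - (k:ℝ)/2^n = ((2:ℝ)^n)⁻¹ := by field_simp; ring
      have hofr : ((2:ℝ≥0∞)^n) = ENNReal.ofReal ((2:ℝ)^n) := by
        rw [ENNReal.ofReal_pow (by norm_num : (0:ℝ) ≤ 2)]
        norm_num
      rw [h, hofr, ← ENNReal.ofReal_inv_of_pos h2n]
    rw [Finset.sum_congr rfl hval, Finset.sum_const, nsmul_eq_mul]
  case disj =>
    intro k hk k' hk' hne
    simp only [Finset.coe_filter, Set.mem_setOf_eq, Finset.mem_range] at hk hk'
    apply Set.Ioc_disjoint_Ioc.mpr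
    rcases lt_or_gt_of_ne hne with h | h
    · have hc : ((k:ℝ)+1) ≤ (k':ℝ) := by exact_mod_cast h
      have hle : ((k:ℝ)+1)/2^n ≤ (k':ℝ)/2^n := by gcongr
      exact le_trans (min_le_left _ _) (le_trans hle (le_max_right _ _))
    · have hc : ((k':ℝ)+1) ≤ (k:ℝ) := by exact_mod_cast h
      have hle : ((k':ℝ)+1)/2^n ≤ (k:ℝ)/2^n := by gcongr
      exact le_trans (min_le_right _ _) (le_trans hle (le_max_left _ _))
end NN

namespace NN

lemma pow_mul_pow_inv (a b : ℕ) (h : a ≤ b) :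
    ((2:ℝ≥0∞)^a) * ((2:ℝ≥0∞)^b)⁻¹ = ((2:ℝ≥0∞)^(b-a))⁻¹ := by
  have hb : (2:ℝ≥0∞)^b = 2^a * 2^(b-a) := by rw [← pow_add]; congr 1; omega
  rw [hb, ENNReal.mul_inv (Or.inl (by positivity)) (Or.inl (ENNReal.pow_ne_top (by norm_num))),
    ← mul_assoc, ENNReal.mul_inv_cancel (by positivity) (ENNReal.pow_ne_top (by norm_num)), one_mul]

lemma vol_D (i : ℕ) (a : ℕ) (ha : a < 2) : volume (D i (a : ℤ)) = 2⁻¹ := by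
  rw [vol_cylinder (i+1) (fun k => k % 2 = a) _ (D_subset i a) ?_]
  · have hc := count1 0 (i+1) a ha (by omega)
    simp only [pow_zero, Nat.div_one] at hc
    rw [hc, Nat.add_sub_cancel, Nat.cast_pow, Nat.cast_ofNat,
      pow_mul_pow_inv i (i+1) (by omega), Nat.add_sub_cancel_left, pow_one]
  · intro k hk ω h1 h2
    have hdig : dyadicDigit ω i = ((k / 2^(i+1-1-i)) % 2 : ℕ) := digit_eq (by omega) h1 h2
    have hd0 : i + 1 - 1 - i = 0 := by omega
    rw [hd0, pow_zero, Nat.div_one] at hdig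
    constructor
    · rintro ⟨-, hω⟩
      rw [hdig] at hω
      exact_mod_cast hω
    · intro hka
      refine ⟨Ioc_subset_unit hk ⟨h1, h2⟩, ?_⟩
      rw [hdig, hka]

lemma vol_DD {i j : ℕ} (hij : i < j) (a b : ℕ) (ha : a < 2) (hb : b < 2) :
    volume (D i (a : ℤ) ∩ D j (b : ℤ)) = 2⁻¹ * 2⁻¹ := by
  rw [vol_cylinder (j+1) (fun k => k / 2^(j-i) % 2 = a ∧ k % 2 = b) _
      (fun ω h => h.1.1) ?_,
    count2 (j-i) j a b (by omega) (by omega) ha hb]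
  · have h1 : (2:ℝ≥0∞)^(j-1) * ((2:ℝ≥0∞)^(j+1))⁻¹ = ((2:ℝ≥0∞)^2)⁻¹ :=
      (pow_mul_pow_inv (j-1) (j+1) (by omega)).trans (by congr 2; omega)
    rw [Nat.cast_pow, Nat.cast_ofNat, h1, pow_two,
      ENNReal.mul_inv (Or.inl (by norm_num)) (Or.inl (by norm_num))]
  · intro k hk ω h1 h2
    have hdi : dyadicDigit ω i = ((k / 2^(j+1-1-i)) % 2 : ℕ) := digit_eq (by omega) h1 h2
    have hdj : dyadicDigit ω j = ((k / 2^(j+1-1-j)) % 2 : ℕ) := digit_eq (by omega) h1 h2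
    have e1 : j + 1 - 1 - i = j - i := by omega
    have e2 : j + 1 - 1 - j = 0 := by omega
    rw [e1] at hdi
    rw [e2, pow_zero, Nat.div_one] at hdj
    have hmem : ω ∈ Set.Ioc (0:ℝ) 1 := Ioc_subset_unit hk ⟨h1, h2⟩
    constructor
    · rintro ⟨⟨-, hωi⟩, -, hωj⟩
      rw [hdi] at hωi; rw [hdj] at hωj
      exact ⟨by exact_mod_cast hωi, by exact_mod_cast hωj⟩
    · rintro ⟨hka, hkb⟩
      exact ⟨⟨hmem, by rw [hdi, hka]⟩, ⟨hmem, by rw [hdj, hkb]⟩⟩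

lemma vol_Ioc01 : volume (Set.Ioc (0:ℝ) 1) = 1 := by
  rw [Real.volume_Ioc]; norm_num

end NN

namespace NN

open scoped Classical in
/-- value of the preimage measure. -/
noncomputable def cval (s : Set ℝ) : ℝ≥0∞ :=
  (if (1:ℝ) ∈ s then 2⁻¹ else 0) + (if (0:ℝ) ∈ s then 2⁻¹ else 0)

open scoped Classical in
lemma preimage_inter (i : ℕ) (s : Set ℝ) :
    {ω : ℝ | (dyadicDigit ω i : ℝ) ∈ s} ∩ Set.Ioc (0:ℝ) 1 =
      (if (1:ℝ) ∈ s then D i 1 else ∅) ∪ (if (0:ℝ) ∈ s then D i 0 else ∅) := by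
  ext ω
  simp only [Set.mem_inter_iff, Set.mem_setOf_eq, Set.mem_union]
  constructor
  · rintro ⟨hs, hω⟩
    rcases digit_mem hω i with h0 | h1
    · rw [h0] at hs; push_cast at hs
      right
      rw [if_pos hs]
      exact ⟨hω, h0⟩
    · rw [h1] at hs; push_cast at hs
      left
      rw [if_pos hs]
      exact ⟨hω, h1⟩
  · intro h
    rcases h with h | h
    · by_cases h1 : (1:ℝ) ∈ s
      · rw [if_pos h1] at h
        refine ⟨?_, h.1⟩
        rw [h.2]; push_cast; exact h1
      · rw [if_neg h1] at h; exact absurd h (Set.notMem_empty ω)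
    · by_cases h0 : (0:ℝ) ∈ s
      · rw [if_pos h0] at h
        refine ⟨?_, h.1⟩
        rw [h.2]; push_cast; exact h0
      · rw [if_neg h0] at h; exact absurd h (Set.notMem_empty ω)

open scoped Classical in
lemma vol_E (i : ℕ) (s : Set ℝ) :
    volume ((if (1:ℝ) ∈ s then D i 1 else ∅) ∪ (if (0:ℝ) ∈ s then D i 0 else ∅)) = cval s := by
  have v1 : volume (D i 1) = 2⁻¹ := by exact_mod_cast vol_D i 1 (by omega)
  have v0 : volume (D i 0) = 2⁻¹ := by exact_mod_cast vol_D i 0 (by omega)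
  unfold cval
  split_ifs with h1 h0 h0
  · rw [D_union]
    rw [vol_Ioc01, ENNReal.inv_two_add_inv_two]
  · rw [Set.union_empty, v1, add_zero]
  · rw [Set.empty_union, v0, zero_add]
  · simp

open scoped Classical in
lemma vol_EE {i j : ℕ} (hij : i < j) (s t : Set ℝ) :
    volume (((if (1:ℝ) ∈ s then D i 1 else ∅) ∪ (if (0:ℝ) ∈ s then D i 0 else ∅)) ∩
      ((if (1:ℝ) ∈ t then D j 1 else ∅) ∪ (if (0:ℝ) ∈ t then D j 0 else ∅))) = cval s * cval t := by
  have v1 : ∀ a b : ℕ, a < 2 → b < 2 → volume (D i (a:ℤ) ∩ D j (b:ℤ)) = 2⁻¹ * 2⁻¹ :=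
    fun a b ha hb => vol_DD hij a b ha hb
  have vDD11 : volume (D i 1 ∩ D j 1) = 2⁻¹ * 2⁻¹ := by exact_mod_cast v1 1 1 (by omega) (by omega)
  have vDD10 : volume (D i 1 ∩ D j 0) = 2⁻¹ * 2⁻¹ := by exact_mod_cast v1 1 0 (by omega) (by omega)
  have vDD01 : volume (D i 0 ∩ D j 1) = 2⁻¹ * 2⁻¹ := by exact_mod_cast v1 0 1 (by omega) (by omega)
  have vDD00 : volume (D i 0 ∩ D j 0) = 2⁻¹ * 2⁻¹ := by exact_mod_cast v1 0 0 (by omega) (by omega)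
  have vi1 : volume (D i 1) = 2⁻¹ := by exact_mod_cast vol_D i 1 (by omega)
  have vi0 : volume (D i 0) = 2⁻¹ := by exact_mod_cast vol_D i 0 (by omega)
  have vj1 : volume (D j 1) = 2⁻¹ := by exact_mod_cast vol_D j 1 (by omega)
  have vj0 : volume (D j 0) = 2⁻¹ := by exact_mod_cast vol_D j 0 (by omega)
  have hwhole1 : D i 1 ∩ (D j 1 ∪ D j 0) = D i 1 := by
    rw [D_union]; exact Set.inter_eq_left.mpr (D_subset i 1)
  have hwhole0 : D i 0 ∩ (D j 1 ∪ D j 0) = D i 0 := by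
    rw [D_union]; exact Set.inter_eq_left.mpr (D_subset i 0)
  have hwhole'1 : (D i 1 ∪ D i 0) ∩ D j 1 = D j 1 := by
    rw [D_union]; exact Set.inter_eq_right.mpr (D_subset j 1)
  have hwhole'0 : (D i 1 ∪ D i 0) ∩ D j 0 = D j 0 := by
    rw [D_union]; exact Set.inter_eq_right.mpr (D_subset j 0)
  have hII : (D i 1 ∪ D i 0) ∩ (D j 1 ∪ D j 0) = Set.Ioc (0:ℝ) 1 := by
    rw [D_union, D_union, Set.inter_self]
  unfold cval
  split_ifs <;>
    try simp only [Set.union_empty, Set.empty_union, Set.inter_empty, Set.empty_inter,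
      measure_empty, add_zero, zero_add, mul_zero, zero_mul]
  all_goals first
    | rfl
    | (rw [hII, vol_Ioc01, ENNReal.inv_two_add_inv_two, one_mul])
    | (rw [hwhole'1, vj1, ENNReal.inv_two_add_inv_two, one_mul])
    | (rw [hwhole'0, vj0, ENNReal.inv_two_add_inv_two, one_mul])
    | (rw [hwhole1, vi1, ENNReal.inv_two_add_inv_two, mul_one])
    | (rw [hwhole0, vi0, ENNReal.inv_two_add_inv_two, mul_one])
    | exact vDD11
    | exact vDD10
    | exact vDD01
    | exact vDD00

end NN

namespace NN

noncomputable def mu : Measure ℝ := volume.restrict (Set.Ioc (0:ℝ) 1)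

instance : IsProbabilityMeasure mu := by
  constructor
  rw [mu, Measure.restrict_apply_univ, vol_Ioc01]

open scoped Classical in
lemma mu_pre (i : ℕ) (s : Set ℝ) (hs : MeasurableSet s) :
    mu ((fun ω => (dyadicDigit ω i : ℝ)) ⁻¹' s) = cval s := by
  rw [mu, Measure.restrict_apply ((measurable_X i) hs)]
  have : (fun ω => (dyadicDigit ω i : ℝ)) ⁻¹' s = {ω : ℝ | (dyadicDigit ω i : ℝ) ∈ s} := rfl
  rw [this, preimage_inter i s, vol_E i s]

open scoped Classical in
lemma mu_pre2 {i j : ℕ} (hij : i < j) (s t : Set ℝ) (hs : MeasurableSet s)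
    (ht : MeasurableSet t) :
    mu ((fun ω => (dyadicDigit ω i : ℝ)) ⁻¹' s ∩ (fun ω => (dyadicDigit ω j : ℝ)) ⁻¹' t)
      = cval s * cval t := by
  rw [mu, Measure.restrict_apply (((measurable_X i) hs).inter ((measurable_X j) ht))]
  have heq : ((fun ω => (dyadicDigit ω i : ℝ)) ⁻¹' s ∩ (fun ω => (dyadicDigit ω j : ℝ)) ⁻¹' t)
      ∩ Set.Ioc (0:ℝ) 1
      = ({ω : ℝ | (dyadicDigit ω i : ℝ) ∈ s} ∩ Set.Ioc (0:ℝ) 1) ∩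
        ({ω : ℝ | (dyadicDigit ω j : ℝ) ∈ t} ∩ Set.Ioc (0:ℝ) 1) := by
    ext ω
    simp only [Set.mem_inter_iff, Set.mem_setOf_eq, Set.mem_preimage]
    tauto
  rw [heq, preimage_inter i s, preimage_inter j t, vol_EE hij s t]

lemma indep_digits : Pairwise (Function.onFun (fun (f g : ℝ → ℝ) => ProbabilityTheory.IndepFun f g mu)
    (fun (i : ℕ) (ω : ℝ) => (dyadicDigit ω i : ℝ))) := by
  have key : ∀ i j : ℕ, i < j → ProbabilityTheory.IndepFun
      (fun ω : ℝ => (dyadicDigit ω i : ℝ)) (fun ω : ℝ => (dyadicDigit ω j : ℝ)) mu := by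
    intro i j hij
    rw [ProbabilityTheory.indepFun_iff_measure_inter_preimage_eq_mul]
    intro s t hs ht
    rw [mu_pre i s hs, mu_pre j t ht, mu_pre2 hij s t hs ht]
  intro i j hij
  rcases lt_or_gt_of_ne hij with h | h
  · exact key i j h
  · exact (key j i h).symm

lemma ident_digits (i : ℕ) : ProbabilityTheory.IdentDistrib
    (fun ω : ℝ => (dyadicDigit ω i : ℝ)) (fun ω : ℝ => (dyadicDigit ω 0 : ℝ)) mu mu := by
  refine ⟨(measurable_X i).aemeasurable, (measurable_X 0).aemeasurable, ?_⟩
  apply Measure.ext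
  intro s hs
  rw [Measure.map_apply (measurable_X i) hs, Measure.map_apply (measurable_X 0) hs,
    mu_pre i s hs, mu_pre 0 s hs]

lemma X0_ae_eq : (fun ω : ℝ => (dyadicDigit ω 0 : ℝ)) =ᵐ[mu] (D 0 1).indicator (fun _ => (1:ℝ)) := by
  rw [mu, Filter.EventuallyEq]
  rw [ae_restrict_iff' measurableSet_Ioc]
  filter_upwards with ω hω
  rcases digit_mem hω 0 with h0 | h1
  · rw [h0]
    have : ω ∉ D 0 1 := by
      rintro ⟨-, hd⟩
      rw [h0] at hd; exact absurd hd (by norm_num)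
    rw [Set.indicator_of_notMem this]
    norm_num
  · rw [h1]
    rw [Set.indicator_of_mem (show ω ∈ D 0 1 from ⟨hω, h1⟩)]
    norm_num

lemma X0_integrable : Integrable (fun ω : ℝ => (dyadicDigit ω 0 : ℝ)) mu := by
  refine (integrable_congr X0_ae_eq.symm).mp ?_
  exact (integrable_const (1:ℝ)).indicator (measurableSet_D 0 1)

lemma X0_integral : ∫ ω, (dyadicDigit ω 0 : ℝ) ∂mu = 1/2 := by
  rw [integral_congr_ae X0_ae_eq, integral_indicator_const (1:ℝ) (measurableSet_D 0 1)]
  have : mu (D 0 1) = 2⁻¹ := by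
    rw [mu, Measure.restrict_apply (measurableSet_D 0 1),
      Set.inter_eq_left.mpr (D_subset 0 1)]
    exact_mod_cast vol_D 0 1 (by omega)
  rw [measureReal_def, this]
  simp only [smul_eq_mul, mul_one]
  rw [ENNReal.toReal_inv]
  norm_num

/-- The strong law conclusion. -/
lemma vol_normal : volume {ω : ℝ | ω ∈ Set.Ioc (0:ℝ) 1 ∧
    Tendsto (fun n : ℕ => (∑ i ∈ Finset.range n, (dyadicDigit ω i : ℝ)) / n)
      atTop (𝓝 (1/2))} = 1 := by
  have hslln := ProbabilityTheory.strong_law_ae_real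
    (fun i (ω : ℝ) => (dyadicDigit ω i : ℝ)) X0_integrable indep_digits ident_digits
  rw [X0_integral] at hslln
  set P : ℝ → Prop := fun ω => Tendsto
    (fun n : ℕ => (∑ i ∈ Finset.range n, (dyadicDigit ω i : ℝ)) / n) atTop (𝓝 (1/2)) with hP
  have hbad : volume ({ω : ℝ | ¬ P ω} ∩ Set.Ioc (0:ℝ) 1) = 0 := by
    have := ae_iff.mp hslln
    rwa [mu, Measure.restrict_apply' measurableSet_Ioc] at this
  have hNeq : {ω : ℝ | ω ∈ Set.Ioc (0:ℝ) 1 ∧ P ω}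
      = Set.Ioc (0:ℝ) 1 \ ({ω : ℝ | ¬ P ω} ∩ Set.Ioc (0:ℝ) 1) := by
    ext ω
    simp only [Set.mem_setOf_eq, Set.mem_diff, Set.mem_inter_iff]
    tauto
  rw [hNeq, measure_diff_null hbad, vol_Ioc01]

end NN

namespace NN

lemma nowhereDense_of (F : Set ℝ)
    (h : ∀ a b : ℝ, a < b → ∃ c d : ℝ, c < d ∧ Set.Ioo c d ⊆ Set.Ioo a b ∧ Set.Ioo c d ∩ F = ∅) :
    IsNowhereDense F := by
  rw [IsNowhereDense]
  by_contra hne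
  obtain ⟨x, hx⟩ := Set.nonempty_iff_ne_empty.mpr hne
  obtain ⟨ε, hε, hball⟩ := Metric.isOpen_iff.mp isOpen_interior x hx
  have hsub : Set.Ioo (x - ε) (x + ε) ⊆ closure F := by
    rw [← Real.ball_eq_Ioo]; exact hball.trans interior_subset
  obtain ⟨c, d, hcd, hsub', hdisj⟩ := h (x - ε) (x + ε) (by linarith)
  obtain ⟨y, hy⟩ : (Set.Ioo c d).Nonempty := Set.nonempty_Ioo.mpr hcd
  have hyc : y ∈ closure F := hsub (hsub' hy)
  have hne2 := (mem_closure_iff.mp hyc) (Set.Ioo c d) isOpen_Ioo hy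
  rw [hdisj] at hne2
  exact Set.not_nonempty_empty hne2

/-- The sets witnessing meagerness. -/
def FF (m : ℕ) : Set ℝ := {ω : ℝ | ω ∈ Set.Ioc (0:ℝ) 1 ∧
  ∀ n : ℕ, m ≤ n → (∑ i ∈ Finset.range n, (dyadicDigit ω i : ℝ)) / n ≤ 3/4}

lemma oddK (kk q jj : ℕ) (hjj : jj < q) : (((kk+1) * 2^q - 1) / 2^jj) % 2 = 1 := by
  have h2q : 2^q = 2^(q-jj-1) * 2 * 2^jj := by
    rw [← pow_succ, ← pow_add]; congr 1; omega
  have hpos1 : 1 ≤ 2^jj := Nat.one_le_two_pow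
  have hpos2 : 1 ≤ 2^(q-jj-1) := Nat.one_le_two_pow
  set B := (kk+1) * 2^(q-jj-1) with hB
  have hBpos : 1 ≤ B := by
    rw [hB]; exact Nat.one_le_iff_ne_zero.mpr (by positivity)
  have hKeq : (kk+1) * 2^q = 2*B * 2^jj := by rw [h2q, hB]; ring
  have hdiv : ((kk+1) * 2^q - 1) / 2^jj = 2*B - 1 := by
    apply Nat.div_eq_of_lt_le
    · rw [hKeq, Nat.sub_mul, one_mul]
      exact Nat.sub_le_sub_left hpos1 _
    · rw [hKeq, Nat.sub_add_cancel (by omega : 1 ≤ 2*B)]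
      exact Nat.sub_lt (by positivity) one_pos
  rw [hdiv]
  omega

lemma FF_nowhereDense (m : ℕ) : IsNowhereDense (FF m) := by
  apply nowhereDense_of
  intro a b hab
  by_cases hm : max a 0 < min b 1
  case neg =>
    refine ⟨a, b, hab, le_refl _, ?_⟩
    ext ω
    simp only [Set.mem_inter_iff, Set.mem_Ioo, Set.mem_empty_iff_false, iff_false, not_and]
    rintro ⟨ha, hb⟩ ⟨⟨h0, h1⟩, -⟩
    push_neg at hm
    have hω1 : max a 0 < ω := max_lt ha h0
    rcases min_lt_iff.mp (lt_of_le_of_lt hm hω1) with h | h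
    · linarith
    · linarith
  case pos =>
    set a' := max a 0 with ha'
    set b' := min b 1 with hb'
    have ha0 : 0 ≤ a' := le_max_right a 0
    have hb1 : b' ≤ 1 := min_le_right b 1
    have haa : a ≤ a' := le_max_left a 0
    have hbb : b' ≤ b := min_le_left b 1
    obtain ⟨p, hp⟩ : ∃ p : ℕ, ((2:ℝ)⁻¹)^p < (b' - a')/2 :=
      exists_pow_lt_of_lt_one (by linarith) (by norm_num)
    rw [inv_pow] at hp
    have h2p : (0:ℝ) < 2^p := by positivity
    set kk : ℕ := ⌊a' * 2^p⌋.toNat + 1 with hkk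
    have hfl : (0:ℤ) ≤ ⌊a' * 2^p⌋ := Int.floor_nonneg.mpr (by positivity)
    have f1 : (kk:ℝ) - 1 ≤ a' * 2^p := by
      have h := Int.floor_le (a' * 2^p)
      have hc : ((kk:ℝ)) - 1 = (⌊a' * 2^p⌋ : ℝ) := by
        have : ((kk:ℤ)) - 1 = ⌊a' * 2^p⌋ := by omega
        exact_mod_cast congrArg (Int.cast : ℤ → ℝ) this
      linarith [hc ▸ h]
    have f2 : a' * 2^p < (kk:ℝ) := by
      have h := Int.lt_floor_add_one (a' * 2^p)
      have hc : ((kk:ℝ)) = (⌊a' * 2^p⌋ : ℝ) + 1 := by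
        have : (kk:ℤ) = ⌊a' * 2^p⌋ + 1 := by omega
        exact_mod_cast congrArg (Int.cast : ℤ → ℝ) this
      linarith [hc ▸ h]
    have hlow : a' < (kk:ℝ)/2^p := by
      rw [lt_div_iff₀ h2p]; linarith
    have hhigh : ((kk:ℝ)+1)/2^p < b' := by
      rw [div_lt_iff₀ h2p]
      have hc : ((2:ℝ)^p)⁻¹ * 2^p = 1 := inv_mul_cancel₀ (ne_of_gt h2p)
      have h3 : (2:ℝ) < (b' - a') * 2^p := by nlinarith [hp, hc, h2p]
      nlinarith [f1, h3]
    have hkk2p : kk + 1 ≤ 2^p := by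
      by_contra hcon
      push_neg at hcon
      have : (2:ℝ)^p < (kk:ℝ) + 1 := by exact_mod_cast (by omega : 2^p < kk + 1)
      have : (1:ℝ) < ((kk:ℝ)+1)/2^p := by rw [lt_div_iff₀ h2p]; linarith
      linarith
    set q : ℕ := 3*p + m + 1 with hq
    set n : ℕ := p + q with hn
    set K : ℕ := (kk+1) * 2^q - 1 with hK
    have h2q : (0:ℝ) < 2^q := by positivity
    have h2n : (0:ℝ) < 2^n := by positivity
    have h2neq : (2:ℝ)^n = 2^p * 2^q := by rw [hn, pow_add]
    have hKcast : (K:ℝ) = ((kk:ℝ)+1) * 2^q - 1 := by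
      have h1 : 1 ≤ (kk+1) * 2^q := Nat.one_le_iff_ne_zero.mpr (by positivity)
      have hZ : (K:ℤ) = ((kk:ℤ)+1) * 2^q - 1 := by
        rw [hK]
        push_cast [h1]
        ring
      exact_mod_cast congrArg (Int.cast : ℤ → ℝ) hZ
    refine ⟨((kk:ℝ)+1)/2^p - ((2:ℝ)^n)⁻¹, ((kk:ℝ)+1)/2^p, by linarith [inv_pos.mpr h2n], ?_, ?_⟩
    · intro ω hω
      obtain ⟨hω1, hω2⟩ := hω
      constructor
      · have hpow : (2:ℝ)^p ≤ 2^n := by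
          apply pow_le_pow_right₀ (by norm_num : (1:ℝ) ≤ 2) (by omega)
        have hinv : ((2:ℝ)^n)⁻¹ ≤ ((2:ℝ)^p)⁻¹ := by
          apply inv_anti₀ h2p hpow
        have heq : ((kk:ℝ)+1)/2^p - ((2:ℝ)^p)⁻¹ = (kk:ℝ)/2^p := by
          field_simp; ring
        have : (kk:ℝ)/2^p ≤ ((kk:ℝ)+1)/2^p - ((2:ℝ)^n)⁻¹ := by linarith
        linarith [hlow, haa]
      · linarith [hhigh, hbb]
    · -- disjointness with FF m
      ext ω
      simp only [Set.mem_inter_iff, Set.mem_Ioo, Set.mem_empty_iff_false, iff_false, not_and]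
      rintro ⟨hc1, hc2⟩ hFF
      obtain ⟨hω01, hbound⟩ := hFF
      -- interval bounds for K at level n
      have hK2 : ω ≤ ((K:ℝ)+1)/2^n := by
        rw [hKcast]
        have : (((kk:ℝ)+1) * 2^q - 1 + 1)/2^n = ((kk:ℝ)+1)/2^p := by
          rw [h2neq]; field_simp; ring
        rw [this]; linarith
      have hK1 : (K:ℝ)/2^n < ω := by
        rw [hKcast]
        have : (((kk:ℝ)+1) * 2^q - 1)/2^n = ((kk:ℝ)+1)/2^p - ((2:ℝ)^n)⁻¹ := by
          rw [h2neq]; field_simp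
        rw [this]; linarith
      have hdig1 : ∀ i, p ≤ i → i < n → dyadicDigit ω i = 1 := by
        intro i hpi hin
        have hd := digit_eq hin hK1 hK2
        rw [hK] at hd
        rw [hd, oddK kk q (n-1-i) (by omega)]
        norm_num
      have hsum : (q:ℝ) ≤ ∑ i ∈ Finset.range n, (dyadicDigit ω i : ℝ) := by
        have h1 : ∀ i ∈ Finset.Ico p n, (dyadicDigit ω i : ℝ) = 1 := by
          intro i hi
          rw [Finset.mem_Ico] at hi
          rw [hdig1 i hi.1 hi.2]; norm_num
        have h2 : ∑ i ∈ Finset.Ico p n, (dyadicDigit ω i : ℝ) = q := by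
          rw [Finset.sum_congr rfl h1, Finset.sum_const, Nat.card_Ico, nsmul_eq_mul, mul_one]
          norm_cast
          omega
        calc (q:ℝ) = ∑ i ∈ Finset.Ico p n, (dyadicDigit ω i : ℝ) := h2.symm
        _ ≤ ∑ i ∈ Finset.range n, (dyadicDigit ω i : ℝ) := by
            apply Finset.sum_le_sum_of_subset_of_nonneg
            · intro x hx
              rw [Finset.mem_Ico] at hx
              exact Finset.mem_range.mpr hx.2
            · intro i hi _
              rcases digit_mem hω01 i with h | h <;> rw [h] <;> norm_num
      have hnpos : (0:ℝ) < n := by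
        have : 0 < n := by omega
        exact_mod_cast this
      have hfrac : (3:ℝ)/4 < (q:ℝ)/n := by
        rw [div_lt_div_iff₀ (by norm_num) hnpos]
        have hqn : 3 * (n:ℝ) < (q:ℝ) * 4 := by
          have : 3 * n < q * 4 := by omega
          exact_mod_cast this
        linarith
      have hle := hbound n (by omega)
      have : (q:ℝ)/n ≤ (∑ i ∈ Finset.range n, (dyadicDigit ω i : ℝ))/n := by
        gcongr
      linarith

end NN

namespace NN

lemma meager_normal : IsMeagre {ω : ℝ | ω ∈ Set.Ioc (0:ℝ) 1 ∧
    Tendsto (fun n : ℕ => (∑ i ∈ Finset.range n, (dyadicDigit ω i : ℝ)) / n)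
      atTop (𝓝 (1/2))} := by
  have hsub : {ω : ℝ | ω ∈ Set.Ioc (0:ℝ) 1 ∧
      Tendsto (fun n : ℕ => (∑ i ∈ Finset.range n, (dyadicDigit ω i : ℝ)) / n)
        atTop (𝓝 (1/2))} ⊆ ⋃ m, FF m := by
    rintro ω ⟨hω, ht⟩
    have hev := ht.eventually_lt_const (show (1:ℝ)/2 < 3/4 by norm_num)
    rw [eventually_atTop] at hev
    obtain ⟨m, hm⟩ := hev
    exact Set.mem_iUnion.mpr ⟨m, hω, fun n hn => (hm n hn).le⟩
  refine IsMeagre.mono hsub ?_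
  apply isMeagre_iUnion
  intro m
  rw [isMeagre_iff_countable_union_isNowhereDense]
  exact ⟨{FF m}, by simpa using FF_nowhereDense m, Set.countable_singleton _,
    by simp⟩

end NN


end NormalProof

/-- The set of normal numbers in `(0,1]` is meager but has full Lebesgue measure. -/
theorem normal_numbers_meager_full_measure :
    IsMeagre {ω : ℝ | ω ∈ Set.Ioc (0:ℝ) 1 ∧
        Tendsto (fun n : ℕ => (∑ i ∈ Finset.range n, (dyadicDigit ω i : ℝ)) / n)
          atTop (𝓝 (1/2))} ∧
    MeasureTheory.volume {ω : ℝ | ω ∈ Set.Ioc (0:ℝ) 1 ∧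
        Tendsto (fun n : ℕ => (∑ i ∈ Finset.range n, (dyadicDigit ω i : ℝ)) / n)
          atTop (𝓝 (1/2))} = 1 := by
  exact ⟨NN.meager_normal, NN.vol_normal⟩
end
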